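/- arXiv:2401.17017 — 7 statements merged into one kernel-verified Lean document; each statement's English description precedes it below -/
import Mathlib

section
/- In the 2-dimensional warped product AdS' = (-π/2, π/2) ×_cos ℝ, two points (t₁,x₁) and (t₂,x₂) are causally related, (t₁,x₁) ≤ (t₂,x₂), if and only if t₁ ≤ t₂ and sin(t₁)sin(t₂) + cos(t₁)cos(t₂)cosh(x₂ - x₁) ≤ 1. -/
noncomputable section
open Real Set Filter

/-- A future-directed causal curve `s ↦ (α s, β s)` on `[a,b]` in the Lorentzian warped
product comparison space `I ×_f ℝ`, i.e. the spacetime `I × ℝ` with the continuous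
metric `-dt² + f(t)² dx²` and time orientation `∂ₜ`. -/
def IsCausalCurve (I : Set ℝ) (f : ℝ → ℝ) (a b : ℝ) (α β : ℝ → ℝ) : Prop :=
  a < b ∧ (∀ s ∈ Set.Icc a b, α s ∈ I) ∧
    (∀ s ∈ Set.Icc a b, DifferentiableAt ℝ α s ∧ DifferentiableAt ℝ β s) ∧
    (∀ s ∈ Set.Icc a b, 0 < deriv α s ∧ (f (α s)) ^ 2 * (deriv β s) ^ 2 ≤ (deriv α s) ^ 2)

/-- A future-directed timelike curve in `I ×_f ℝ`. -/
def IsTimelikeCurve (I : Set ℝ) (f : ℝ → ℝ) (a b : ℝ) (α β : ℝ → ℝ) : Prop :=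
  IsCausalCurve I f a b α β ∧
    ∀ s ∈ Set.Icc a b, (f (α s)) ^ 2 * (deriv β s) ^ 2 < (deriv α s) ^ 2

/-- The causal relation `≤` of `I ×_f ℝ`: there is a future-directed causal curve
from `p` to `q`, or `p = q`. -/
def causalRel (I : Set ℝ) (f : ℝ → ℝ) (p q : ℝ × ℝ) : Prop :=
  p = q ∨ ∃ a b α β, IsCausalCurve I f a b α β ∧
    α a = p.1 ∧ β a = p.2 ∧ α b = q.1 ∧ β b = q.2

/-- The chronological (timelike) relation `≪` of `I ×_f ℝ`. -/
def chronRel (I : Set ℝ) (f : ℝ → ℝ) (p q : ℝ × ℝ) : Prop :=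
  ∃ a b α β, IsTimelikeCurve I f a b α β ∧
    α a = p.1 ∧ β a = p.2 ∧ α b = q.1 ∧ β b = q.2

/-- The Lorentzian length `∫ √(α'² - f(α)² β'²)` of a causal curve in `I ×_f ℝ`. -/
def lorLength (f : ℝ → ℝ) (a b : ℝ) (α β : ℝ → ℝ) : ℝ :=
  ∫ s in a..b, Real.sqrt ((deriv α s) ^ 2 - (f (α s)) ^ 2 * (deriv β s) ^ 2)

/-- The time separation function of `I ×_f ℝ`: the supremum of Lorentzian lengths of
future-directed causal curves from `p` to `q` (and `0` if there are none). -/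
def timeSep (I : Set ℝ) (f : ℝ → ℝ) (p q : ℝ × ℝ) : ℝ :=
  sSup (insert 0 {L | ∃ a b α β, IsCausalCurve I f a b α β ∧
    α a = p.1 ∧ β a = p.2 ∧ α b = q.1 ∧ β b = q.2 ∧ L = lorLength f a b α β})

/-- The underlying interval `(-π/2, π/2)` of `AdS' = (-π/2,π/2) ×_cos ℝ`. -/
def adsStrip : Set ℝ := Set.Ioo (-(π / 2)) (π / 2)


/-! ### Auxiliary lemmas -/

/-- Null coordinate on the strip: `lamAdS t = arsinh (tan t)`. -/
def lamAdS (t : ℝ) : ℝ := Real.arsinh (Real.tan t)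

lemma sqrt_one_add_tan_sq {t : ℝ} (h : t ∈ adsStrip) :
    Real.sqrt (1 + Real.tan t ^ 2) = 1 / Real.cos t := by
  have hc : 0 < Real.cos t := Real.cos_pos_of_mem_Ioo h
  have h1 : (1 : ℝ) + Real.tan t ^ 2 = (1 / Real.cos t) ^ 2 := by
    rw [Real.tan_eq_sin_div_cos]
    field_simp
    exact Real.cos_sq_add_sin_sq t
  rw [h1, Real.sqrt_sq (by positivity)]

lemma cosh_lamAdS {t : ℝ} (h : t ∈ adsStrip) :
    Real.cosh (lamAdS t) = 1 / Real.cos t := by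
  rw [lamAdS, Real.cosh_arsinh, sqrt_one_add_tan_sq h]

lemma sinh_lamAdS (t : ℝ) : Real.sinh (lamAdS t) = Real.tan t := Real.sinh_arsinh _

lemma hasDerivAt_lamAdS {t : ℝ} (h : t ∈ adsStrip) :
    HasDerivAt lamAdS (1 / Real.cos t) t := by
  have hc : 0 < Real.cos t := Real.cos_pos_of_mem_Ioo h
  have := (Real.hasDerivAt_arsinh (Real.tan t)).comp t (Real.hasDerivAt_tan hc.ne')
  refine this.congr_deriv ?_
  rw [sqrt_one_add_tan_sq h]
  field_simp

lemma cosh_lamAdS_sub {t₁ t₂ : ℝ} (h₁ : t₁ ∈ adsStrip) (h₂ : t₂ ∈ adsStrip) :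
    Real.cos t₁ * Real.cos t₂ * Real.cosh (lamAdS t₂ - lamAdS t₁)
      = 1 - Real.sin t₁ * Real.sin t₂ := by
  have hc₁ : 0 < Real.cos t₁ := Real.cos_pos_of_mem_Ioo h₁
  have hc₂ : 0 < Real.cos t₂ := Real.cos_pos_of_mem_Ioo h₂
  rw [Real.cosh_sub, cosh_lamAdS h₁, cosh_lamAdS h₂, sinh_lamAdS, sinh_lamAdS,
    Real.tan_eq_sin_div_cos, Real.tan_eq_sin_div_cos]
  field_simp

lemma lamAdS_lt_lamAdS {t₁ t₂ : ℝ} (h₁ : t₁ ∈ adsStrip) (h₂ : t₂ ∈ adsStrip)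
    (hlt : t₁ < t₂) : lamAdS t₁ < lamAdS t₂ :=
  Real.arsinh_lt_arsinh.2 (Real.tan_lt_tan_of_lt_of_lt_pi_div_two h₁.1 h₂.2 hlt)

/-- Along a causal curve, time strictly increases and the null coordinates are monotone. -/
lemma causal_forward_aux {a b : ℝ} {α β : ℝ → ℝ}
    (hC : IsCausalCurve adsStrip Real.cos a b α β) :
    α a < α b ∧ |β b - β a| ≤ lamAdS (α b) - lamAdS (α a) := by
  obtain ⟨hab, hmem, hdiff, hcaus⟩ := hC
  have hcont : ContinuousOn α (Set.Icc a b) := fun s hs =>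
    ((hdiff s hs).1.continuousAt).continuousWithinAt
  have hmono : StrictMonoOn α (Set.Icc a b) := by
    apply strictMonoOn_of_deriv_pos (convex_Icc a b) hcont
    intro s hs
    rw [interior_Icc] at hs
    exact (hcaus s (Set.Ioo_subset_Icc_self hs)).1
  have haIcc : a ∈ Set.Icc a b := ⟨le_refl _, hab.le⟩
  have hbIcc : b ∈ Set.Icc a b := ⟨hab.le, le_refl _⟩
  refine ⟨hmono haIcc hbIcc hab, ?_⟩
  have key : ∀ ε : ℝ, ε = 1 ∨ ε = -1 →
      lamAdS (α a) + ε * β a ≤ lamAdS (α b) + ε * β b := by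
    intro ε hε
    have hD : ∀ s ∈ Set.Icc a b,
        HasDerivAt (fun u => lamAdS (α u) + ε * β u)
          (1 / Real.cos (α s) * deriv α s + ε * deriv β s) s := by
      intro s hs
      exact ((hasDerivAt_lamAdS (hmem s hs)).comp s (hdiff s hs).1.hasDerivAt).add
        (((hdiff s hs).2.hasDerivAt).const_mul ε)
    have hmono2 : MonotoneOn (fun u => lamAdS (α u) + ε * β u) (Set.Icc a b) := by
      apply monotoneOn_of_deriv_nonneg (convex_Icc a b)
      · exact fun s hs => (hD s hs).continuousAt.continuousWithinAt
      · intro s hs; rw [interior_Icc] at hs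
        exact (hD s (Set.Ioo_subset_Icc_self hs)).differentiableAt.differentiableWithinAt
      · intro s hs; rw [interior_Icc] at hs
        have hs' := Set.Ioo_subset_Icc_self hs
        rw [(hD s hs').deriv]
        have hc : 0 < Real.cos (α s) := Real.cos_pos_of_mem_Ioo (hmem s hs')
        obtain ⟨hα', hineq⟩ := hcaus s hs'
        set A := deriv α s
        set B := deriv β s
        set c := Real.cos (α s)
        have h2 : 0 ≤ A + ε * c * B := by
          rcases hε with rfl | rfl
          · nlinarith [sq_nonneg (A + c * B)]
          · nlinarith [sq_nonneg (A - c * B)]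
        have h3 : 1 / c * A + ε * B = (A + ε * c * B) / c := by field_simp
        rw [h3]
        positivity
    exact hmono2 haIcc hbIcc hab.le
  have k1 := key 1 (Or.inl rfl)
  have k2 := key (-1) (Or.inr rfl)
  rw [abs_le]
  constructor <;> linarith

lemma hasDerivAt_arctan_sinh (s : ℝ) :
    HasDerivAt (fun u => Real.arctan (Real.sinh u)) (1 / Real.cosh s) s := by
  have h := (Real.hasDerivAt_arctan (Real.sinh s)).comp s (Real.hasDerivAt_sinh s)
  refine h.congr_deriv ?_
  rw [show (1 : ℝ) + Real.sinh s ^ 2 = Real.cosh s ^ 2 by rw [Real.cosh_sq]; ring]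
  rw [div_mul_eq_mul_div, pow_two]
  field_simp [(Real.cosh_pos s).ne']

lemma cos_arctan_sinh (s : ℝ) :
    Real.cos (Real.arctan (Real.sinh s)) = 1 / Real.cosh s := by
  rw [Real.cos_arctan,
    show (1 : ℝ) + Real.sinh s ^ 2 = Real.cosh s ^ 2 by rw [Real.cosh_sq]; ring,
    Real.sqrt_sq (Real.cosh_pos s).le]

/-- Construction of a causal curve between points inside each other's null cones. -/
lemma causal_backward_aux {t₁ x₁ t₂ x₂ : ℝ} (h₁ : t₁ ∈ adsStrip) (h₂ : t₂ ∈ adsStrip)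
    (hlt : t₁ < t₂) (hx : |x₂ - x₁| ≤ lamAdS t₂ - lamAdS t₁) :
    ∃ a b α β, IsCausalCurve adsStrip Real.cos a b α β ∧
      α a = t₁ ∧ β a = x₁ ∧ α b = t₂ ∧ β b = x₂ := by
  set a := lamAdS t₁ with ha
  set b := lamAdS t₂ with hb
  have hab : a < b := lamAdS_lt_lamAdS h₁ h₂ hlt
  set k := (x₂ - x₁) / (b - a) with hkdef
  have hk : |k| ≤ 1 := by
    rw [hkdef, abs_div, abs_of_pos (by linarith : (0:ℝ) < b - a)]
    exact (div_le_one (by linarith)).2 hx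
  have hk2 : k ^ 2 ≤ 1 := by nlinarith [sq_abs k, abs_nonneg k]
  have hβ : ∀ s : ℝ, HasDerivAt (fun u => x₁ + k * (u - a)) k s := by
    intro s
    simpa using (((hasDerivAt_id s).sub_const a).const_mul k).const_add x₁
  refine ⟨a, b, fun s => Real.arctan (Real.sinh s), fun s => x₁ + k * (s - a),
    ⟨hab, ?_, ?_, ?_⟩, ?_, ?_, ?_, ?_⟩
  · intro s _
    exact ⟨Real.neg_pi_div_two_lt_arctan _, Real.arctan_lt_pi_div_two _⟩
  · intro s _
    exact ⟨(hasDerivAt_arctan_sinh s).differentiableAt, (hβ s).differentiableAt⟩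
  · intro s _
    rw [(hasDerivAt_arctan_sinh s).deriv, (hβ s).deriv, cos_arctan_sinh s]
    constructor
    · positivity
    · calc (1 / Real.cosh s) ^ 2 * k ^ 2 ≤ (1 / Real.cosh s) ^ 2 * 1 :=
          mul_le_mul_of_nonneg_left hk2 (by positivity)
        _ = (1 / Real.cosh s) ^ 2 := mul_one _
  · show Real.arctan (Real.sinh a) = t₁
    rw [ha, lamAdS, Real.sinh_arsinh, Real.arctan_tan h₁.1 h₁.2]
  · simp
  · show Real.arctan (Real.sinh b) = t₂
    rw [hb, lamAdS, Real.sinh_arsinh, Real.arctan_tan h₂.1 h₂.2]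
  · show x₁ + k * (b - a) = x₂
    rw [hkdef, div_mul_cancel₀ _ (by linarith : b - a ≠ 0)]
    ring

/-- In `AdS' = (-π/2, π/2) ×_cos ℝ`, two points `(t₁,x₁)` and `(t₂,x₂)` are causally
related iff `t₁ ≤ t₂` and `sin t₁ sin t₂ + cos t₁ cos t₂ cosh (x₂ - x₁) ≤ 1`. -/
theorem adsPrime_causal_iff (t₁ x₁ t₂ x₂ : ℝ) (h₁ : t₁ ∈ adsStrip) (h₂ : t₂ ∈ adsStrip) :
    causalRel adsStrip Real.cos (t₁, x₁) (t₂, x₂) ↔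
      t₁ ≤ t₂ ∧
        Real.sin t₁ * Real.sin t₂ + Real.cos t₁ * Real.cos t₂ * Real.cosh (x₂ - x₁) ≤ 1 := by
  have hc₁ : 0 < Real.cos t₁ := Real.cos_pos_of_mem_Ioo h₁
  have hc₂ : 0 < Real.cos t₂ := Real.cos_pos_of_mem_Ioo h₂
  constructor
  · rintro (heq | ⟨a, b, α, β, hC, ha1, ha2, hb1, hb2⟩)
    · rw [Prod.mk.injEq] at heq
      obtain ⟨rfl, rfl⟩ := heq
      refine ⟨le_refl _, ?_⟩
      rw [sub_self, Real.cosh_zero, mul_one]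
      nlinarith [Real.sin_sq_add_cos_sq t₁]
    · obtain ⟨hlt, habs⟩ := causal_forward_aux hC
      rw [ha1, hb1] at hlt
      rw [ha1, ha2, hb1, hb2] at habs
      refine ⟨hlt.le, ?_⟩
      have hΔ : 0 ≤ lamAdS t₂ - lamAdS t₁ := le_trans (abs_nonneg _) habs
      have hcosh : Real.cosh (x₂ - x₁) ≤ Real.cosh (lamAdS t₂ - lamAdS t₁) :=
        Real.cosh_le_cosh.2 (by rwa [abs_of_nonneg hΔ])
      have hid := cosh_lamAdS_sub h₁ h₂
      have hmul := mul_le_mul_of_nonneg_left hcosh (mul_pos hc₁ hc₂).le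
      linarith
  · rintro ⟨hle, hineq⟩
    rcases eq_or_lt_of_le hle with rfl | hlt
    · left
      have h1cosh : 1 ≤ Real.cosh (x₂ - x₁) := Real.one_le_cosh _
      have hcosh1 : Real.cosh (x₂ - x₁) ≤ 1 := by
        nlinarith [Real.sin_sq_add_cos_sq t₁, mul_pos hc₁ hc₁]
      have hx0 : x₂ - x₁ = 0 := by
        by_contra hne
        have := Real.one_lt_cosh.mpr hne
        linarith
      rw [Prod.mk.injEq]
      exact ⟨rfl, by linarith⟩
    · right
      have hid := cosh_lamAdS_sub h₁ h₂
      have hΔ : 0 < lamAdS t₂ - lamAdS t₁ := sub_pos.2 (lamAdS_lt_lamAdS h₁ h₂ hlt)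
      have hcosh : Real.cosh (x₂ - x₁) ≤ Real.cosh (lamAdS t₂ - lamAdS t₁) := by
        have hpos : 0 < Real.cos t₁ * Real.cos t₂ := mul_pos hc₁ hc₂
        rw [← mul_le_mul_iff_right₀ hpos]
        linarith
      have habs : |x₂ - x₁| ≤ lamAdS t₂ - lamAdS t₁ := by
        have := Real.cosh_le_cosh.1 hcosh
        rwa [abs_of_pos hΔ] at this
      exact causal_backward_aux h₁ h₂ hlt habs
end
end

section
/- In AdS' = (-π/2, π/2) ×_cos ℝ, if t₁ ≤ t₂ and (t₁,x₁) ≤ (t₂,x₂), then the time separation is τ((t₁,x₁),(t₂,x₂)) = arccos(sin(t₁)sin(t₂) + cos(t₁)cos(t₂)cosh(x₂ - x₁)). -/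
noncomputable section
open Real Set Filter

open Topology MeasureTheory intervalIntegral

-- algebraic lemma: Gram inequality for upper bound
lemma gram_ineq (u v σ c h g ap bp : ℝ)
    (hu : u^2 = 1 - v^2) (hs : σ^2 = 1 - c^2) (hh : h^2 = 1 + g^2) :
    ((ap*(u*c - v*σ*h) + v*c*g*bp))^2 - (1 - (u*σ + v*c*h)^2)*(ap^2 - c^2*bp^2)
      = (u*c^2*bp + v*g*ap - v*σ*c*h*bp)^2 := by
  linear_combination (c^2*ap^2 - c^4*bp^2 + σ^2*ap^2 - σ^2*c^2*bp^2) * hu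
    + (ap^2 - c^2*bp^2 - v^2*ap^2 + v^2*h^2*ap^2 + v^2*c^2*bp^2 - v^2*c^2*h^2*bp^2) * hs
    + (v^2*ap^2 - v^2*c^2*bp^2) * hh

-- geodesic unit-speed identity
lemma geo_unit (x0 x1 x2 y0 y1 y2 : ℝ)
    (h1 : -x0^2-x1^2+x2^2 = -1) (h2 : -(x0*y0)-x1*y1+x2*y2 = 0) (h3 : -y0^2-y1^2+y2^2 = -1) :
    y0^2*x1^2 - (y2*(1-x0^2) + x2*x0*y0)^2 = (1-x0^2)*x1^2 := by
  linear_combination (1 - y1^2 - y0^2 - x0^2 + x0^2*y1^2) * h1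
    + (x1*y1 - x0*y0 - x0^2*x1*y1 + x0^3*y0 + x2*y2 - x2*y2*x0^2) * h2
    + (-1 + 2*x0^2 - x0^4 - x2^2 + x2^2*x0^2) * h3

-- tan-monotonicity style fact
lemma tan_mono_aux (u v σ c : ℝ) (hv : 0 < v) (hc : 0 < c)
    (hu2 : u^2 = 1 - v^2) (hs2 : σ^2 = 1 - c^2) (huσ : u ≤ σ) : u*c ≤ v*σ := by
  rcases le_or_gt u 0 with hu | hu
  · have h1 : u*c ≤ 0 := mul_nonpos_of_nonpos_of_nonneg hu hc.le
    rcases le_or_gt 0 σ with hσ | hσ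
    · nlinarith
    · -- u ≤ σ < 0 : u² ≥ σ² so v ≤ c ; (-u)*c ≥ (-σ)*v
      have hu2' : σ^2 ≤ u^2 := by nlinarith
      have hvc : v ≤ c := by nlinarith
      nlinarith
  · -- 0 < u ≤ σ : c ≤ v
    have hσ : 0 < σ := lt_of_lt_of_le hu huσ
    have hcv : c ≤ v := by nlinarith
    nlinarith

lemma sign_lemma (u v σ c h g : ℝ) (hv : 0 < v) (hc : 0 < c)
    (hu2 : u^2 = 1 - v^2) (hs2 : σ^2 = 1 - c^2) (hh2 : h^2 = 1 + g^2) (hh1 : 1 ≤ h)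
    (huσ : u ≤ σ) (hC : u*σ + v*c*h ≤ 1) :
    u*c - v*σ*h + v*|g| ≤ 0 := by
  set q : ℝ := v*σ*h - u*c with hq
  have hq0 : 0 ≤ q := by
    rcases le_or_gt 0 σ with hσ | hσ
    · have h1 : u*c ≤ v*σ := tan_mono_aux u v σ c hv hc hu2 hs2 huσ
      have h2 : v*σ ≤ v*σ*h := by
        nlinarith [mul_nonneg (mul_nonneg hv.le hσ) (sub_nonneg.2 hh1)]
      linarith [h1.trans h2]
    · -- σ < 0 (so u < 0): use constraint
      -- want (-u)*c^2 ≥ (-σ)*(v*c*h)  and  v*c*h ≤ 1 - u*σ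
      have hz : v*c*h ≤ 1 - u*σ := by linarith
      have key : (-σ)*(v*c*h) ≤ (-σ)*(1 - u*σ) := by
        apply mul_le_mul_of_nonneg_left hz (by linarith)
      have key2 : (-σ)*(1 - u*σ) ≤ (-u)*c^2 := by nlinarith
      have hcpos := hc
      nlinarith
  have huσ1 : -1 ≤ u*σ := by nlinarith [sq_nonneg (u+σ), sq_nonneg (v+c)]
  have hsq : v^2*g^2 ≤ q^2 := by
    have key : q^2 - v^2*g^2 = 1 - (v*c*h + u*σ)^2 := by
      simp only [hq]
      linear_combination (c^2 + σ^2) * hu2 + (1 - v^2 + v^2*h^2) * hs2 + (v^2) * hh2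
    have hz0 : 0 < v*c*h := by positivity
    have h1 : v*c*h + u*σ ≤ 1 := by linarith
    have h2 : -1 ≤ v*c*h + u*σ := by linarith
    nlinarith [mul_nonneg (sub_nonneg.2 h1) (by linarith : (0:ℝ) ≤ 1 + (v*c*h + u*σ))]
  have : v*|g| ≤ q := by
    nlinarith [abs_nonneg g, sq_abs g, mul_nonneg hv.le (abs_nonneg g)]
  linarith

lemma sinusoid_pos (A B T : ℝ) (hT0 : 0 < T) (hTpi : T < π)
    (h0 : 0 < A) (hT : 0 < A * Real.cos T + B * Real.sin T) :
    ∀ τ ∈ Icc (0:ℝ) T, 0 < A * Real.cos τ + B * Real.sin τ := by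
  intro τ ⟨h1, h2⟩
  have hsT : 0 < Real.sin T := Real.sin_pos_of_pos_of_lt_pi hT0 hTpi
  have key : (A * Real.cos τ + B * Real.sin τ) * Real.sin T
      = A * Real.sin (T - τ) + (A * Real.cos T + B * Real.sin T) * Real.sin τ := by
    rw [Real.sin_sub]; ring
  rcases eq_or_lt_of_le h1 with h1' | h1'
  · simpa [← h1'] using h0
  · have hsτ : 0 < Real.sin τ := Real.sin_pos_of_pos_of_lt_pi h1' (lt_of_le_of_lt h2 hTpi)
    have hsTτ : 0 ≤ Real.sin (T - τ) :=
      Real.sin_nonneg_of_nonneg_of_le_pi (by linarith) (by linarith)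
    nlinarith [mul_nonneg h0.le hsTτ, mul_pos hT hsτ]

/-- null coordinate `w = artanh (sin t)` -/
def wfun (t : ℝ) : ℝ := Real.log ((1 + Real.sin t) / Real.cos t)

lemma one_add_sin_pos {t : ℝ} (ht : 0 < Real.cos t) : 0 < 1 + Real.sin t := by
  nlinarith [Real.sin_sq_add_cos_sq t, Real.neg_one_le_sin t]

lemma wfun_base_pos {t : ℝ} (ht : 0 < Real.cos t) : 0 < (1 + Real.sin t) / Real.cos t :=
  div_pos (one_add_sin_pos ht) ht

lemma wfun_hasDerivAt {t : ℝ} (ht : 0 < Real.cos t) : HasDerivAt wfun (1 / Real.cos t) t := by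
  have h1 : HasDerivAt (fun s => 1 + Real.sin s) (Real.cos t) t :=
    (Real.hasDerivAt_sin t).const_add 1
  have h2 : HasDerivAt Real.cos (-Real.sin t) t := Real.hasDerivAt_cos t
  have hdiv := h1.div h2 (ne_of_gt ht)
  have hlog := hdiv.log (ne_of_gt (wfun_base_pos ht))
  refine hlog.congr_deriv ?_
  show (Real.cos t * Real.cos t - (1 + Real.sin t) * -Real.sin t) /
    Real.cos t ^ 2 / ((1 + Real.sin t) / Real.cos t) = 1 / Real.cos t
  have hs := Real.sin_sq_add_cos_sq t
  have h1s := one_add_sin_pos ht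
  field_simp
  nlinarith [hs]

lemma cosh_wfun {t : ℝ} (ht : 0 < Real.cos t) : Real.cosh (wfun t) = 1 / Real.cos t := by
  have h1s := one_add_sin_pos ht
  have hb := wfun_base_pos ht
  rw [Real.cosh_eq, wfun, Real.exp_log hb, Real.exp_neg, Real.exp_log hb]
  have hs := Real.sin_sq_add_cos_sq t
  field_simp
  nlinarith [hs]

lemma sinh_wfun {t : ℝ} (ht : 0 < Real.cos t) : Real.sinh (wfun t) = Real.sin t / Real.cos t := by
  have h1s := one_add_sin_pos ht
  have hb := wfun_base_pos ht
  rw [Real.sinh_eq, wfun, Real.exp_log hb, Real.exp_neg, Real.exp_log hb]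
  have hs := Real.sin_sq_add_cos_sq t
  field_simp
  nlinarith [hs]

lemma cone_bound {a x : ℝ} (ha : 0 < a) (h : x^2 ≤ a^2) : -a ≤ x ∧ x ≤ a := by
  constructor <;> nlinarith

set_option maxHeartbeats 1000000 in
lemma length_le_eps {t₀ t₁ x₁ a b : ℝ} {α β : ℝ → ℝ}
    (ht₀ : t₀ ∈ adsStrip) (ht₀1 : t₀ < t₁)
    (hcc : IsCausalCurve adsStrip Real.cos a b α β) (ha1 : α a = t₁) (hb1 : β a = x₁) :
    lorLength Real.cos a b α β ≤
      Real.arccos (Real.sin t₀ * Real.sin (α b) +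
        Real.cos t₀ * (Real.cos (α b) * Real.cosh (β b - x₁))) := by
  obtain ⟨hab, hstrip, hdiff, hcaus⟩ := hcc
  set M := Real.arccos (Real.sin t₀ * Real.sin (α b) +
        Real.cos t₀ * (Real.cos (α b) * Real.cosh (β b - x₁))) with hM
  have hMnn : 0 ≤ M := Real.arccos_nonneg _
  -- if the integrand is not interval-integrable, the length is 0
  by_cases hint : IntervalIntegrable
      (fun s => Real.sqrt ((deriv α s) ^ 2 - (Real.cos (α s)) ^ 2 * (deriv β s) ^ 2))
      volume a b
  swap
  · rw [lorLength, intervalIntegral.integral_undef hint]; exact hMnn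
  -- basic positivity facts
  have hv : 0 < Real.cos t₀ := Real.cos_pos_of_mem_Ioo ht₀
  have hcα : ∀ s ∈ Icc a b, 0 < Real.cos (α s) := fun s hs =>
    Real.cos_pos_of_mem_Ioo (hstrip s hs)
  have hαcont : ContinuousOn α (Icc a b) := fun s hs =>
    ((hdiff s hs).1).continuousAt.continuousWithinAt
  have hmono : StrictMonoOn α (Icc a b) := by
    apply strictMonoOn_of_deriv_pos (convex_Icc a b) hαcont
    intro s hs
    rw [interior_Icc] at hs
    exact (hcaus s (Ioo_subset_Icc_self hs)).1
  have ht1le : ∀ s ∈ Icc a b, t₁ ≤ α s := by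
    intro s hs
    rw [← ha1]
    exact hmono.monotoneOn (left_mem_Icc.2 hab.le) hs hs.1
  -- derivative bound |β'| ≤ α' / cos α
  have hcone : ∀ s ∈ Icc a b, -(deriv α s) ≤ Real.cos (α s) * deriv β s ∧
      Real.cos (α s) * deriv β s ≤ deriv α s := by
    intro s hs
    refine cone_bound (hcaus s hs).1 ?_
    calc (Real.cos (α s) * deriv β s)^2 = (Real.cos (α s))^2 * (deriv β s)^2 := by ring
    _ ≤ (deriv α s)^2 := (hcaus s hs).2
  -- monotone null coordinates
  have hWd : ∀ s ∈ Icc a b, HasDerivAt (fun r => wfun (α r))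
      (1 / Real.cos (α s) * deriv α s) s := by
    intro s hs
    exact (wfun_hasDerivAt (hcα s hs)).comp s ((hdiff s hs).1.hasDerivAt)
  have hWtotal : ∀ s ∈ Icc a b, ∀ e : ℝ, e = 1 ∨ e = -1 →
      (wfun (α a) + e * β a) ≤ (wfun (α s) + e * β s) := by
    intro s hs e he
    have hmono2 : MonotoneOn (fun r => wfun (α r) + e * β r) (Icc a b) := by
      apply monotoneOn_of_deriv_nonneg (convex_Icc a b)
      · intro r hr
        exact ((hWd r hr).add (((hdiff r hr).2.hasDerivAt).const_mul e)).continuousAt.continuousWithinAt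
      · intro r hr
        rw [interior_Icc] at hr
        have hr' := Ioo_subset_Icc_self hr
        exact ((hWd r hr').add (((hdiff r hr').2.hasDerivAt).const_mul e)).differentiableAt.differentiableWithinAt
      · intro r hr
        rw [interior_Icc] at hr
        have hr' := Ioo_subset_Icc_self hr
        rw [(show HasDerivAt (fun r => wfun (α r) + e * β r) _ r from
          ((hWd r hr').add (((hdiff r hr').2.hasDerivAt).const_mul e))).deriv]
        have hcop := hcα r hr'
        have hco := hcone r hr'
        rcases he with he | he <;> subst he
        · calc (0:ℝ) ≤ (deriv α r + Real.cos (α r) * deriv β r) / Real.cos (α r) :=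
              div_nonneg (by linarith [hco.1]) hcop.le
          _ = 1 / Real.cos (α r) * deriv α r + 1 * deriv β r := by field_simp
        · calc (0:ℝ) ≤ (deriv α r - Real.cos (α r) * deriv β r) / Real.cos (α r) :=
              div_nonneg (by linarith [hco.2]) hcop.le
          _ = 1 / Real.cos (α r) * deriv α r + -1 * deriv β r := by field_simp; ring
    exact hmono2 (left_mem_Icc.2 hab.le) hs hs.1
  have hΔ : ∀ s ∈ Icc a b, β s - x₁ ≤ wfun (α s) - wfun t₁ ∧
      x₁ - β s ≤ wfun (α s) - wfun t₁ := by
    intro s hs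
    have h1 := hWtotal s hs 1 (Or.inl rfl)
    have h2 := hWtotal s hs (-1) (Or.inr rfl)
    rw [ha1, hb1] at h1 h2
    constructor <;> linarith
  have ht₁ : t₁ ∈ adsStrip := ha1 ▸ hstrip a (left_mem_Icc.2 hab.le)
  have hv₁ : 0 < Real.cos t₁ := Real.cos_pos_of_mem_Ioo ht₁
  have hw01 : wfun t₀ < wfun t₁ := by
    have htan : Real.sin t₀ / Real.cos t₀ < Real.sin t₁ / Real.cos t₁ := by
      rw [div_lt_div_iff₀ hv hv₁]
      have hsin : 0 < Real.sin (t₁ - t₀) :=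
        Real.sin_pos_of_pos_of_lt_pi (by linarith) (by
          have h1 := ht₀.1
          have h2 := ht₁.2
          linarith)
      rw [Real.sin_sub] at hsin
      linarith
    have : Real.sinh (wfun t₀) < Real.sinh (wfun t₁) := by
      rwa [sinh_wfun hv, sinh_wfun hv₁]
    exact Real.sinh_lt_sinh.mp this
  -- the comparison function and its derivative
  set Cf : ℝ → ℝ := fun s => Real.sin t₀ * Real.sin (α s) +
      Real.cos t₀ * (Real.cos (α s) * Real.cosh (β s - x₁)) with hCf
  set Cd : ℝ → ℝ := fun s => Real.sin t₀ * (Real.cos (α s) * deriv α s) +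
      Real.cos t₀ * ((-Real.sin (α s) * deriv α s) * Real.cosh (β s - x₁) +
        Real.cos (α s) * (Real.sinh (β s - x₁) * deriv β s)) with hCd
  have hCderiv : ∀ s ∈ Icc a b, HasDerivAt Cf (Cd s) s := by
    intro s hs
    have hα := (hdiff s hs).1.hasDerivAt
    have hβ := (hdiff s hs).2.hasDerivAt
    have h1 : HasDerivAt (fun r => Real.sin (α r)) (Real.cos (α s) * deriv α s) s := hα.sin
    have h2 : HasDerivAt (fun r => Real.cos (α r)) (-Real.sin (α s) * deriv α s) s := hα.cos
    have h4 : HasDerivAt (fun r => Real.cosh (β r - x₁))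
        (Real.sinh (β s - x₁) * deriv β s) s := (hβ.sub_const x₁).cosh
    exact (h1.const_mul _).add ((h2.mul h4).const_mul _)
  have hClt1 : ∀ s ∈ Icc a b, Cf s < 1 := by
    intro s hs
    have hcαs := hcα s hs
    have hΔs := hΔ s hs
    have h7 : 0 ≤ wfun (α s) - wfun t₁ := by linarith [hΔs.1, hΔs.2]
    have habs : |β s - x₁| < |wfun (α s) - wfun t₀| := by
      rw [abs_of_nonneg (by linarith : (0:ℝ) ≤ wfun (α s) - wfun t₀), abs_lt]
      constructor <;> linarith [hΔs.1, hΔs.2]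
    have hcosh : Real.cosh (β s - x₁) < Real.cosh (wfun (α s) - wfun t₀) :=
      Real.cosh_lt_cosh.2 habs
    have hkey : Real.cos t₀ * (Real.cos (α s) * Real.cosh (wfun (α s) - wfun t₀))
        = 1 - Real.sin t₀ * Real.sin (α s) := by
      rw [Real.cosh_sub, cosh_wfun hcαs, cosh_wfun hv, sinh_wfun hcαs, sinh_wfun hv]
      field_simp
    have hlt := mul_lt_mul_of_pos_left hcosh (mul_pos hv hcαs)
    simp only [hCf]
    nlinarith [hlt, hkey]
  have hCgt : ∀ s ∈ Icc a b, -1 < Cf s := by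
    intro s hs
    have hcαs := hcα s hs
    simp only [hCf]
    nlinarith [sq_nonneg (Real.sin t₀ + Real.sin (α s)),
      sq_nonneg (Real.cos t₀ + Real.cos (α s)), mul_pos hv hcαs,
      Real.one_le_cosh (β s - x₁), Real.sin_sq_add_cos_sq t₀, Real.sin_sq_add_cos_sq (α s),
      mul_nonneg (mul_pos hv hcαs).le (sub_nonneg.2 (Real.one_le_cosh (β s - x₁)))]
  -- sign of the derivative
  have hCdle : ∀ s ∈ Icc a b, Cd s ≤ 0 := by
    intro s hs
    have hcαs := hcα s hs
    have hap := (hcaus s hs).1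
    have hco := hcone s hs
    have huσ : Real.sin t₀ ≤ Real.sin (α s) := by
      have hm := hstrip s hs
      have := Real.strictMonoOn_sin (mem_Icc.2 ⟨ht₀.1.le, ht₀.2.le⟩)
        (mem_Icc.2 ⟨(hm.1).le, (hm.2).le⟩) (lt_of_lt_of_le ht₀1 (ht1le s hs))
      exact this.le
    have hsgn := sign_lemma (Real.sin t₀) (Real.cos t₀) (Real.sin (α s)) (Real.cos (α s))
      (Real.cosh (β s - x₁)) (Real.sinh (β s - x₁)) hv hcαs
      (Real.sin_sq t₀) (Real.sin_sq (α s))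
      (by rw [Real.cosh_sq]; ring) (Real.one_le_cosh _)
      huσ (by have h := hClt1 s hs; simp only [hCf] at h; linarith)
    have hCd_eq : Cd s = deriv α s * (Real.sin t₀ * Real.cos (α s)
        - Real.cos t₀ * Real.sin (α s) * Real.cosh (β s - x₁))
        + Real.cos t₀ * Real.cos (α s) * Real.sinh (β s - x₁) * deriv β s := by
      simp only [hCd]; ring
    -- bound the β' term
    have habs2 : |Real.cos (α s) * deriv β s| ≤ deriv α s := abs_le.2 ⟨by linarith [hco.1], hco.2⟩
    have hterm : Real.cos t₀ * Real.cos (α s) * Real.sinh (β s - x₁) * deriv β s ≤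
        deriv α s * (Real.cos t₀ * |Real.sinh (β s - x₁)|) := by
      have h1 : Real.cos (α s) * Real.sinh (β s - x₁) * deriv β s ≤
          |Real.sinh (β s - x₁)| * deriv α s := by
        calc Real.cos (α s) * Real.sinh (β s - x₁) * deriv β s
            = Real.sinh (β s - x₁) * (Real.cos (α s) * deriv β s) := by ring
          _ ≤ |Real.sinh (β s - x₁) * (Real.cos (α s) * deriv β s)| := le_abs_self _
          _ = |Real.sinh (β s - x₁)| * |Real.cos (α s) * deriv β s| := abs_mul _ _
          _ ≤ |Real.sinh (β s - x₁)| * deriv α s := by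
              exact mul_le_mul_of_nonneg_left habs2 (abs_nonneg _)
      calc Real.cos t₀ * Real.cos (α s) * Real.sinh (β s - x₁) * deriv β s
          = Real.cos t₀ * (Real.cos (α s) * Real.sinh (β s - x₁) * deriv β s) := by ring
        _ ≤ Real.cos t₀ * (|Real.sinh (β s - x₁)| * deriv α s) :=
            mul_le_mul_of_nonneg_left h1 hv.le
        _ = deriv α s * (Real.cos t₀ * |Real.sinh (β s - x₁)|) := by ring
    rw [hCd_eq]
    have hfin : deriv α s * (Real.sin t₀ * Real.cos (α s)
        - Real.cos t₀ * Real.sin (α s) * Real.cosh (β s - x₁)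
        + Real.cos t₀ * |Real.sinh (β s - x₁)|) ≤ 0 :=
      mul_nonpos_of_nonneg_of_nonpos hap.le (by linarith [hsgn])
    nlinarith [hterm, hfin]
  -- pointwise bound on the integrand
  set F : ℝ → ℝ := fun s => Real.arccos (Cf s) with hF
  have hFderiv : ∀ s ∈ Icc a b,
      HasDerivAt F (-(1 / Real.sqrt (1 - Cf s ^ 2)) * Cd s) s := fun s hs =>
    (Real.hasDerivAt_arccos (ne_of_gt (hCgt s hs)) (ne_of_lt (hClt1 s hs))).comp s (hCderiv s hs)
  have hpt : ∀ s ∈ Icc a b,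
      Real.sqrt ((deriv α s)^2 - (Real.cos (α s))^2*(deriv β s)^2) ≤
        -(1 / Real.sqrt (1 - Cf s ^ 2)) * Cd s := by
    intro s hs
    have hcαs := hcα s hs
    have h1C : 0 < 1 - Cf s ^ 2 := by nlinarith [hClt1 s hs, hCgt s hs]
    have hKpos : 0 < Real.sqrt (1 - Cf s ^ 2) := Real.sqrt_pos.2 h1C
    have hK2 : (Real.sqrt (1 - Cf s ^ 2))^2 = 1 - Cf s ^ 2 := Real.sq_sqrt h1C.le
    have hgram := gram_ineq (Real.sin t₀) (Real.cos t₀) (Real.sin (α s)) (Real.cos (α s))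
      (Real.cosh (β s - x₁)) (Real.sinh (β s - x₁)) (deriv α s) (deriv β s)
      (Real.sin_sq t₀) (Real.sin_sq (α s)) (by rw [Real.cosh_sq]; ring)
    have hCd_eq : Cd s = (deriv α s)*(Real.sin t₀ * Real.cos (α s)
        - Real.cos t₀ * Real.sin (α s) * Real.cosh (β s - x₁))
        + Real.cos t₀ * Real.cos (α s) * Real.sinh (β s - x₁) * deriv β s := by
      simp only [hCd]; ring
    have hCf_eq : Cf s = Real.sin t₀ * Real.sin (α s) +
        Real.cos t₀ * Real.cos (α s) * Real.cosh (β s - x₁) := by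
      simp only [hCf]; ring
    have h9 : ((deriv α s)^2 - (Real.cos (α s))^2*(deriv β s)^2) * (Real.sqrt (1 - Cf s ^ 2))^2
        ≤ (Cd s)^2 := by
      rw [hK2, hCd_eq, hCf_eq]
      have heq : (Cd s)^2 - (1 - (Real.sin t₀ * Real.sin (α s) +
          Real.cos t₀ * Real.cos (α s) * Real.cosh (β s - x₁))^2) *
          ((deriv α s)^2 - (Real.cos (α s))^2*(deriv β s)^2)
          = (Real.sin t₀*(Real.cos (α s))^2*(deriv β s)
            + Real.cos t₀*(Real.sinh (β s - x₁))*(deriv α s)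
            - Real.cos t₀*(Real.sin (α s))*(Real.cos (α s))*(Real.cosh (β s - x₁))*(deriv β s))^2 := by
        rw [hCd_eq]
        linear_combination hgram
      rw [← hCd_eq]
      nlinarith [heq, sq_nonneg (Real.sin t₀*(Real.cos (α s))^2*(deriv β s)
        + Real.cos t₀*(Real.sinh (β s - x₁))*(deriv α s)
        - Real.cos t₀*(Real.sin (α s))*(Real.cos (α s))*(Real.cosh (β s - x₁))*(deriv β s))]
    have h10 : (deriv α s)^2 - (Real.cos (α s))^2*(deriv β s)^2 ≤
        (Cd s / Real.sqrt (1 - Cf s ^ 2))^2 := by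
      rw [div_pow, le_div_iff₀ (by positivity)]
      exact h9
    calc Real.sqrt ((deriv α s)^2 - (Real.cos (α s))^2*(deriv β s)^2)
        ≤ Real.sqrt ((Cd s / Real.sqrt (1 - Cf s ^ 2))^2) := Real.sqrt_le_sqrt h10
      _ = |Cd s / Real.sqrt (1 - Cf s ^ 2)| := Real.sqrt_sq_eq_abs _
      _ = -(Cd s / Real.sqrt (1 - Cf s ^ 2)) :=
          abs_of_nonpos (div_nonpos_of_nonpos_of_nonneg (hCdle s hs) hKpos.le)
      _ = -(1 / Real.sqrt (1 - Cf s ^ 2)) * Cd s := by ring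
  -- integrate
  have hFcont : ContinuousOn F (Icc a b) := fun s hs =>
    (hFderiv s hs).continuousAt.continuousWithinAt
  have hφint : IntegrableOn
      (fun s => Real.sqrt ((deriv α s) ^ 2 - (Real.cos (α s)) ^ 2 * (deriv β s) ^ 2))
      (Icc a b) := (intervalIntegrable_iff_integrableOn_Icc_of_le hab.le).1 hint
  have hle := integral_le_sub_of_hasDeriv_right_of_le hab.le hFcont
    (fun x hx => (hFderiv x (Ioo_subset_Icc_self hx)).hasDerivWithinAt)
    hφint (fun x hx => hpt x (Ioo_subset_Icc_self hx))
  have hFa : 0 ≤ F a := Real.arccos_nonneg _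
  have hFb : F b = M := by simp only [hF, hCf, hM]
  calc lorLength Real.cos a b α β
      = ∫ s in a..b, Real.sqrt ((deriv α s)^2 - (Real.cos (α s))^2*(deriv β s)^2) := rfl
    _ ≤ F b - F a := hle
    _ ≤ M := by rw [hFb]; linarith

lemma w_pos_aux (x0 x1 x2 : ℝ) (h1 : -x0^2 - x1^2 + x2^2 = -1)
    (hp : 0 < x1 + x2) (hm : 0 < x1 - x2) : 0 < 1 - x0^2 := by
  nlinarith [mul_pos hp hm]

lemma x0_bounds {x0 : ℝ} (h : 0 < 1 - x0^2) : -1 < x0 ∧ x0 < 1 := by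
  constructor <;> nlinarith

lemma V0num_pos (s1 c1 s2 c2 C : ℝ) (hc1 : 0 < c1) (hpy : s1^2 + c1^2 = 1)
    (hC1 : C < 1) (hCge : s1*s2 + c1*c2 ≤ C) (hs12 : s1 < s2)
    (hsin : 0 < s2*c1 - c2*s1) : 0 < s2 - C*s1 := by
  rcases le_or_gt s1 0 with h | h
  · have hCP : C * s1 ≤ (s1*s2 + c1*c2) * s1 := mul_le_mul_of_nonpos_right hCge h
    have h2 : s2 * (s1^2 + c1^2) = s2 := by rw [hpy]; ring
    nlinarith [hCP, mul_pos hc1 hsin, h2]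
  · nlinarith [mul_pos (show 0 < 1 - C by linarith) h]

lemma Y0Tnum_pos (s1 c1 s2 c2 C : ℝ) (hc2 : 0 < c2) (hpy2 : s2^2 + c2^2 = 1)
    (hC1 : C < 1) (hCge : s1*s2 + c1*c2 ≤ C) (hs12 : s1 < s2)
    (hsin : 0 < s2*c1 - c2*s1) : 0 < C*s2 - s1 := by
  rcases le_or_gt 0 s2 with h | h
  · have hCP : (s1*s2 + c1*c2) * s2 ≤ C * s2 := mul_le_mul_of_nonneg_right hCge h
    have h2 : s1 * (s2^2 + c2^2) = s1 := by rw [hpy2]; ring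
    nlinarith [hCP, mul_pos hc2 hsin, h2]
  · nlinarith [mul_neg_of_pos_of_neg (show 0 < 1 - C by linarith) h]

lemma sqrt1pu_aux (x0 x1 x2 : ℝ) (hw : 0 < 1 - x0^2) (hx1 : 0 < x1)
    (hR1 : -x0^2-x1^2+x2^2 = -1) :
    Real.sqrt (1 + (x2 / Real.sqrt (1 - x0^2))^2) = x1 / Real.sqrt (1 - x0^2) := by
  have hKpos : 0 < Real.sqrt (1 - x0^2) := Real.sqrt_pos.2 hw
  have hK2 : (Real.sqrt (1 - x0^2))^2 = 1 - x0^2 := Real.sq_sqrt hw.le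
  have e : 1 + (x2 / Real.sqrt (1 - x0^2))^2 = (x1 / Real.sqrt (1 - x0^2))^2 := by
    rw [div_pow, div_pow, hK2]
    field_simp
    linear_combination hR1
  rw [e, Real.sqrt_sq (div_nonneg hx1.le hKpos.le)]

lemma Bval_aux (x0 x1 x2 y0 y2 : ℝ) (hw : 0 < 1 - x0^2) (hx1 : 0 < x1)
    (hR1 : -x0^2-x1^2+x2^2 = -1) :
    (Real.sqrt (1 + (x2 / Real.sqrt (1 - x0^2))^2))⁻¹ *
      ((y2 * Real.sqrt (1 - x0^2) - x2 * (1 / (2 * Real.sqrt (1 - x0^2)) * (-(2 * x0 * y0))))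
        / (Real.sqrt (1 - x0^2))^2)
    = (y2*(1-x0^2) + x2*x0*y0) / ((1-x0^2)*x1) := by
  have hKpos : 0 < Real.sqrt (1 - x0^2) := Real.sqrt_pos.2 hw
  have hKne : Real.sqrt (1 - x0^2) ≠ 0 := ne_of_gt hKpos
  have hK2 : (Real.sqrt (1 - x0^2))^2 = 1 - x0^2 := Real.sq_sqrt hw.le
  rw [sqrt1pu_aux x0 x1 x2 hw hx1 hR1]
  have e0 : 1 / (2 * Real.sqrt (1 - x0^2)) * (-(2 * x0 * y0))
      = -(x0*y0) / Real.sqrt (1 - x0^2) := by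
    field_simp
  rw [e0]
  have e1 : y2 * Real.sqrt (1 - x0^2) - x2 * (-(x0*y0) / Real.sqrt (1 - x0^2))
      = (y2*(1-x0^2) + x2*x0*y0) / Real.sqrt (1 - x0^2) := by
    field_simp
    linear_combination y2 * hK2
  rw [e1, inv_div, div_div]
  have e2 : Real.sqrt (1 - x0^2) * (Real.sqrt (1 - x0^2))^2
      = Real.sqrt (1 - x0^2) * (1 - x0^2) := by rw [hK2]
  rw [e2]
  field_simp

lemma unit_aux (x0 x1 x2 y0 y1 y2 : ℝ)
    (h1 : -x0^2-x1^2+x2^2 = -1) (h2 : -(x0*y0)-x1*y1+x2*y2 = 0) (h3 : -y0^2-y1^2+y2^2 = -1)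
    (hw : 0 < 1 - x0^2) (hx1 : 0 < x1) :
    (y0 / Real.sqrt (1 - x0^2))^2
      - (Real.sqrt (1 - x0^2))^2 * ((y2*(1-x0^2) + x2*x0*y0)/((1-x0^2)*x1))^2 = 1 := by
  have hK2 : (Real.sqrt (1 - x0^2))^2 = 1 - x0^2 := Real.sq_sqrt hw.le
  have hgeo := geo_unit x0 x1 x2 y0 y1 y2 h1 h2 h3
  rw [div_pow, div_pow, hK2]
  have e1 : (1 - x0^2) * ((y2*(1-x0^2) + x2*x0*y0)^2 / ((1-x0^2)*x1)^2)
      = (y2*(1-x0^2) + x2*x0*y0)^2 / ((1-x0^2)*x1^2) := by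
    field_simp
  rw [e1, div_sub_div _ _ (ne_of_gt hw) (ne_of_gt (mul_pos hw (pow_pos hx1 2))),
    div_eq_one_iff_eq (ne_of_gt (mul_pos hw (mul_pos hw (pow_pos hx1 2))))]
  linear_combination (1 - x0^2) * hgeo

set_option maxHeartbeats 1000000 in
lemma exists_geodesic {t₁ x₁ t₂ x₂ : ℝ} (h₁ : t₁ ∈ adsStrip) (h₂ : t₂ ∈ adsStrip)
    (hle : t₁ ≤ t₂)
    (hC : Real.sin t₁ * Real.sin t₂ + Real.cos t₁ * Real.cos t₂ * Real.cosh (x₂ - x₁) < 1) :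
    ∃ a b α β, IsCausalCurve adsStrip Real.cos a b α β ∧ α a = t₁ ∧ β a = x₁ ∧
      α b = t₂ ∧ β b = x₂ ∧ lorLength Real.cos a b α β =
        Real.arccos (Real.sin t₁ * Real.sin t₂ +
          Real.cos t₁ * Real.cos t₂ * Real.cosh (x₂ - x₁)) := by
  have hc1 : 0 < Real.cos t₁ := Real.cos_pos_of_mem_Ioo h₁
  have hc2 : 0 < Real.cos t₂ := Real.cos_pos_of_mem_Ioo h₂
  set C : ℝ := Real.sin t₁ * Real.sin t₂ + Real.cos t₁ * Real.cos t₂ * Real.cosh (x₂ - x₁)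
    with hCdef
  have hcosh1 : 1 ≤ Real.cosh (x₂ - x₁) := Real.one_le_cosh _
  have hCgt : -1 < C := by
    rw [hCdef]
    nlinarith [sq_nonneg (Real.sin t₁ + Real.sin t₂), sq_nonneg (Real.cos t₁ + Real.cos t₂),
      mul_pos hc1 hc2, Real.sin_sq_add_cos_sq t₁, Real.sin_sq_add_cos_sq t₂,
      mul_nonneg (mul_pos hc1 hc2).le (sub_nonneg.2 hcosh1)]
  have hlt : t₁ < t₂ := by
    rcases hle.lt_or_eq with h | h
    · exact h
    · exfalso
      rw [hCdef, ← h] at hC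
      nlinarith [Real.sin_sq_add_cos_sq t₁, Real.one_le_cosh (x₂ - x₁), sq_nonneg (Real.cos t₁)]
  have hsin12 : Real.sin t₁ < Real.sin t₂ :=
    Real.strictMonoOn_sin (mem_Icc.2 ⟨h₁.1.le, h₁.2.le⟩) (mem_Icc.2 ⟨h₂.1.le, h₂.2.le⟩) hlt
  have hsin21 : 0 < Real.sin (t₂ - t₁) :=
    Real.sin_pos_of_pos_of_lt_pi (by linarith) (by linarith [h₁.1, h₂.2])
  have hCge : Real.sin t₁ * Real.sin t₂ + Real.cos t₁ * Real.cos t₂ ≤ C := by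
    rw [hCdef]
    nlinarith [mul_nonneg (mul_pos hc1 hc2).le (sub_nonneg.2 hcosh1)]
  set s : ℝ := Real.sqrt (1 - C^2) with hsdef
  have hs2 : s^2 = 1 - C^2 := Real.sq_sqrt (by nlinarith)
  have hs : 0 < s := Real.sqrt_pos.2 (by nlinarith)
  set T : ℝ := Real.arccos C with hTdef
  have hT0 : 0 < T := Real.arccos_pos.2 hC
  have hcosT : Real.cos T = C := Real.cos_arccos hCgt.le hC.le
  have hsinT : Real.sin T = s := by rw [hTdef, Real.sin_arccos, hsdef]
  have hTpi : T < π := by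
    rcases (Real.arccos_le_pi C).lt_or_eq with h | h
    · exact h
    · exfalso
      rw [hTdef] at hcosT
      rw [h] at hcosT
      rw [Real.cos_pi] at hcosT
      linarith
  -- components
  set P0 : ℝ := Real.sin t₁ with hP0
  set P1 : ℝ := Real.cos t₁ * Real.cosh x₁ with hP1
  set P2 : ℝ := Real.cos t₁ * Real.sinh x₁ with hP2
  set Q0 : ℝ := Real.sin t₂ with hQ0
  set Q1 : ℝ := Real.cos t₂ * Real.cosh x₂ with hQ1
  set Q2 : ℝ := Real.cos t₂ * Real.sinh x₂ with hQ2
  set V0 : ℝ := (Q0 - C*P0)/s with hV0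
  set V1 : ℝ := (Q1 - C*P1)/s with hV1
  set V2 : ℝ := (Q2 - C*P2)/s with hV2
  have hV0s : V0 * s = Q0 - C*P0 := by rw [hV0]; field_simp
  have hV1s : V1 * s = Q1 - C*P1 := by rw [hV1]; field_simp
  have hV2s : V2 * s = Q2 - C*P2 := by rw [hV2]; field_simp
  have hPP : -P0^2 - P1^2 + P2^2 = -1 := by
    rw [hP0, hP1, hP2]
    linear_combination (-(Real.cos t₁)^2) * Real.cosh_sq x₁ - Real.sin_sq_add_cos_sq t₁
  have hQQ : -Q0^2 - Q1^2 + Q2^2 = -1 := by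
    rw [hQ0, hQ1, hQ2]
    linear_combination (-(Real.cos t₂)^2) * Real.cosh_sq x₂ - Real.sin_sq_add_cos_sq t₂
  have hPQ : -(P0*Q0) - P1*Q1 + P2*Q2 = -C := by
    rw [hP0, hP1, hP2, hQ0, hQ1, hQ2, hCdef]
    linear_combination (Real.cos t₁ * Real.cos t₂) * Real.cosh_sub x₂ x₁
  have hPV : -(P0*V0) - P1*V1 + P2*V2 = 0 := by
    have h2 : (-(P0*V0) - P1*V1 + P2*V2) * s = 0 := by
      calc (-(P0*V0) - P1*V1 + P2*V2) * s
          = -(P0*(V0*s)) - P1*(V1*s) + P2*(V2*s) := by ring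
        _ = 0 := by rw [hV0s, hV1s, hV2s]; linear_combination hPQ - C * hPP
    exact (mul_eq_zero.1 h2).resolve_right (ne_of_gt hs)
  have hVV : -V0^2 - V1^2 + V2^2 = -1 := by
    have h2 : (-V0^2 - V1^2 + V2^2) * s^2 = (-1) * s^2 := by
      calc (-V0^2 - V1^2 + V2^2) * s^2
          = -(V0*s)^2 - (V1*s)^2 + (V2*s)^2 := by ring
        _ = (-1) * s^2 := by
            rw [hV0s, hV1s, hV2s]
            linear_combination hQQ + (C^2) * hPP - (2*C) * hPQ + hs2
    exact mul_right_cancel₀ (pow_ne_zero 2 (ne_of_gt hs)) h2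
  -- the geodesic
  set X0 : ℝ → ℝ := fun τ => Real.cos τ * P0 + Real.sin τ * V0 with hX0
  set X1 : ℝ → ℝ := fun τ => Real.cos τ * P1 + Real.sin τ * V1 with hX1
  set X2 : ℝ → ℝ := fun τ => Real.cos τ * P2 + Real.sin τ * V2 with hX2
  set Y0 : ℝ → ℝ := fun τ => -Real.sin τ * P0 + Real.cos τ * V0 with hY0
  set Y1 : ℝ → ℝ := fun τ => -Real.sin τ * P1 + Real.cos τ * V1 with hY1
  set Y2 : ℝ → ℝ := fun τ => -Real.sin τ * P2 + Real.cos τ * V2 with hY2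
  have hR1 : ∀ τ, -(X0 τ)^2 - (X1 τ)^2 + (X2 τ)^2 = -1 := by
    intro τ
    simp only [hX0, hX1, hX2]
    linear_combination (Real.cos τ^2) * hPP + (Real.sin τ^2) * hVV +
      (2*Real.sin τ*Real.cos τ) * hPV - Real.sin_sq_add_cos_sq τ
  have hR2 : ∀ τ, -(X0 τ * Y0 τ) - X1 τ * Y1 τ + X2 τ * Y2 τ = 0 := by
    intro τ
    simp only [hX0, hX1, hX2, hY0, hY1, hY2]
    linear_combination (-Real.sin τ*Real.cos τ) * hPP + (Real.sin τ*Real.cos τ) * hVV +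
      ((Real.cos τ)^2 - (Real.sin τ)^2) * hPV
  have hR3 : ∀ τ, -(Y0 τ)^2 - (Y1 τ)^2 + (Y2 τ)^2 = -1 := by
    intro τ
    simp only [hY0, hY1, hY2]
    linear_combination (Real.sin τ^2) * hPP + (Real.cos τ^2) * hVV +
      (-2*Real.sin τ*Real.cos τ) * hPV - Real.sin_sq_add_cos_sq τ
  -- endpoint values
  have hX0T : X0 T = Q0 := by
    rw [hX0]; simp only; rw [hcosT, hsinT]
    field_simp [hV0]
    linear_combination hV0s
  have hX1T : X1 T = Q1 := by
    rw [hX1]; simp only; rw [hcosT, hsinT]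
    field_simp [hV1]
    linear_combination hV1s
  have hX2T : X2 T = Q2 := by
    rw [hX2]; simp only; rw [hcosT, hsinT]
    field_simp [hV2]
    linear_combination hV2s
  have hX00 : X0 0 = P0 := by rw [hX0]; simp
  have hX10 : X1 0 = P1 := by rw [hX1]; simp
  have hX20 : X2 0 = P2 := by rw [hX2]; simp
  -- positivity of X1 ± X2 on [0,T]
  have hA1 : 0 < P1 + P2 := by
    rw [hP1, hP2, ← mul_add, Real.cosh_add_sinh]
    positivity
  have hA2 : 0 < P1 - P2 := by
    rw [hP1, hP2, ← mul_sub, Real.cosh_sub_sinh]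
    positivity
  have hB1 : 0 < Q1 + Q2 := by rw [hQ1, hQ2, ← mul_add, Real.cosh_add_sinh]; positivity
  have hB2 : 0 < Q1 - Q2 := by rw [hQ1, hQ2, ← mul_sub, Real.cosh_sub_sinh]; positivity
  have hXsum : ∀ τ ∈ Icc (0:ℝ) T, 0 < X1 τ + X2 τ := by
    intro τ hτ
    have h := sinusoid_pos (P1 + P2) (V1 + V2) T hT0 hTpi hA1 (by
      have he : (P1+P2) * Real.cos T + (V1+V2) * Real.sin T = X1 T + X2 T := by
        rw [hX1, hX2]; simp only; ring
      rw [he, hX1T, hX2T]; exact hB1) τ hτ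
    calc (0:ℝ) < (P1+P2) * Real.cos τ + (V1+V2)*Real.sin τ := h
    _ = X1 τ + X2 τ := by rw [hX1, hX2]; simp only; ring
  have hXdiff : ∀ τ ∈ Icc (0:ℝ) T, 0 < X1 τ - X2 τ := by
    intro τ hτ
    have h := sinusoid_pos (P1 - P2) (V1 - V2) T hT0 hTpi hA2 (by
      have he : (P1-P2) * Real.cos T + (V1-V2) * Real.sin T = X1 T - X2 T := by
        rw [hX1, hX2]; simp only; ring
      rw [he, hX1T, hX2T]; exact hB2) τ hτ
    calc (0:ℝ) < (P1-P2) * Real.cos τ + (V1-V2)*Real.sin τ := h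
    _ = X1 τ - X2 τ := by rw [hX1, hX2]; simp only; ring
  have hX1pos : ∀ τ ∈ Icc (0:ℝ) T, 0 < X1 τ := fun τ hτ => by
    linarith [hXsum τ hτ, hXdiff τ hτ]
  have hw : ∀ τ ∈ Icc (0:ℝ) T, 0 < 1 - (X0 τ)^2 := fun τ hτ =>
    w_pos_aux _ _ _ (hR1 τ) (hXsum τ hτ) (hXdiff τ hτ)
  -- positivity of Y0 (future directedness)
  have hsin21' : 0 < Real.sin t₂ * Real.cos t₁ - Real.cos t₂ * Real.sin t₁ := by
    have h := hsin21
    rw [Real.sin_sub] at h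
    exact h
  have hCge' : Real.sin t₁ * Real.sin t₂ + Real.cos t₁ * Real.cos t₂ ≤ C := by
    rw [hP0, hQ0] at hCge; exact hCge
  have hsin12' : Real.sin t₁ < Real.sin t₂ := by rw [hP0, hQ0] at hsin12; exact hsin12
  have hV0pos : 0 < V0 := by
    rw [hV0]
    apply div_pos _ hs
    rw [hQ0, hP0]
    have := V0num_pos (Real.sin t₁) (Real.cos t₁) (Real.sin t₂) (Real.cos t₂) C hc1
      (Real.sin_sq_add_cos_sq t₁) hC hCge' hsin12' hsin21'
    linarith
  have hY0T : 0 < Y0 T := by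
    have hYT : Y0 T = (C*Q0 - P0)/s := by
      rw [hY0]; simp only; rw [hcosT, hsinT, hV0]
      field_simp
      linear_combination (-P0) * hs2
    rw [hYT]
    apply div_pos _ hs
    rw [hQ0, hP0]
    have := Y0Tnum_pos (Real.sin t₁) (Real.cos t₁) (Real.sin t₂) (Real.cos t₂) C hc2
      (Real.sin_sq_add_cos_sq t₂) hC hCge' hsin12' hsin21'
    linarith
  have hY0pos : ∀ τ ∈ Icc (0:ℝ) T, 0 < Y0 τ := by
    intro τ hτ
    have h := sinusoid_pos V0 (-P0) T hT0 hTpi hV0pos (by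
      have he : V0 * Real.cos T + (-P0) * Real.sin T = Y0 T := by rw [hY0]; simp only; ring
      rw [he]; exact hY0T) τ hτ
    calc (0:ℝ) < V0 * Real.cos τ + (-P0) * Real.sin τ := h
    _ = Y0 τ := by rw [hY0]; simp only; ring
  -- derivatives of the components
  have hX0d : ∀ τ, HasDerivAt X0 (Y0 τ) τ := by
    intro τ
    simp only [hX0, hY0]
    exact ((Real.hasDerivAt_cos τ).mul_const P0).add ((Real.hasDerivAt_sin τ).mul_const V0)
  have hX2d : ∀ τ, HasDerivAt X2 (Y2 τ) τ := by
    intro τ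
    simp only [hX2, hY2]
    exact ((Real.hasDerivAt_cos τ).mul_const P2).add ((Real.hasDerivAt_sin τ).mul_const V2)
  -- the curve
  set A : ℝ → ℝ := fun τ => Real.arcsin (X0 τ) with hA
  set B : ℝ → ℝ := fun τ => Real.arsinh (X2 τ / Real.sqrt (1 - (X0 τ)^2)) with hB
  have hX0ne : ∀ τ ∈ Icc (0:ℝ) T, X0 τ ≠ -1 ∧ X0 τ ≠ 1 := by
    intro τ hτ
    have h := hw τ hτ
    constructor <;> intro he <;> rw [he] at h <;> norm_num at h
  have hAd : ∀ τ ∈ Icc (0:ℝ) T, HasDerivAt A (Y0 τ / Real.sqrt (1 - (X0 τ)^2)) τ := by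
    intro τ hτ
    have h := (Real.hasDerivAt_arcsin (hX0ne τ hτ).1 (hX0ne τ hτ).2).comp τ (hX0d τ)
    refine h.congr_deriv ?_
    ring
  have hBd : ∀ τ ∈ Icc (0:ℝ) T, HasDerivAt B
      ((Y2 τ * (1 - (X0 τ)^2) + X2 τ * X0 τ * Y0 τ) / ((1 - (X0 τ)^2) * X1 τ)) τ := by
    intro τ hτ
    have hwτ := hw τ hτ
    have hX1τ := hX1pos τ hτ
    have hKpos : 0 < Real.sqrt (1 - (X0 τ)^2) := Real.sqrt_pos.2 hwτ
    have hK2 : (Real.sqrt (1 - (X0 τ)^2))^2 = 1 - (X0 τ)^2 := Real.sq_sqrt hwτ.le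
    have hwd : HasDerivAt (fun r => 1 - (X0 r)^2) (-(2 * X0 τ * Y0 τ)) τ := by
      have h := ((hX0d τ).pow 2).const_sub 1
      refine h.congr_deriv ?_
      simp
    have hsqd : HasDerivAt (fun r => Real.sqrt (1 - (X0 r)^2))
        (1 / (2 * Real.sqrt (1 - (X0 τ)^2)) * (-(2 * X0 τ * Y0 τ))) τ :=
      (Real.hasDerivAt_sqrt (ne_of_gt hwτ)).comp τ hwd
    have hquot := (hX2d τ).div hsqd (ne_of_gt hKpos)
    have harsinh := (Real.hasDerivAt_arsinh _).comp τ hquot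
    refine harsinh.congr_deriv ?_
    exact (Bval_aux (X0 τ) (X1 τ) (X2 τ) (Y0 τ) (Y2 τ) hwτ hX1τ (hR1 τ))
  -- unit speed
  have hcosA : ∀ τ, Real.cos (A τ) = Real.sqrt (1 - (X0 τ)^2) := by
    intro τ
    simp only [hA]
    exact Real.cos_arcsin _
  have hderivA : ∀ τ ∈ Icc (0:ℝ) T, deriv A τ = Y0 τ / Real.sqrt (1 - (X0 τ)^2) :=
    fun τ hτ => (hAd τ hτ).deriv
  have hderivB : ∀ τ ∈ Icc (0:ℝ) T, deriv B τ =
      (Y2 τ * (1 - (X0 τ)^2) + X2 τ * X0 τ * Y0 τ) / ((1 - (X0 τ)^2) * X1 τ) :=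
    fun τ hτ => (hBd τ hτ).deriv
  have hunit : ∀ τ ∈ Icc (0:ℝ) T,
      (deriv A τ)^2 - (Real.cos (A τ))^2 * (deriv B τ)^2 = 1 := by
    intro τ hτ
    have hwτ := hw τ hτ
    have hX1τ := hX1pos τ hτ
    have hK2 : (Real.sqrt (1 - (X0 τ)^2))^2 = 1 - (X0 τ)^2 := Real.sq_sqrt hwτ.le
    rw [hderivA τ hτ, hderivB τ hτ, hcosA τ]
    exact unit_aux (X0 τ) (X1 τ) (X2 τ) (Y0 τ) (Y1 τ) (Y2 τ) (hR1 τ) (hR2 τ) (hR3 τ) hwτ hX1τ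
  -- endpoints
  have hsq1 : Real.sqrt (1 - (Real.sin t₁)^2) = Real.cos t₁ := by
    rw [show (1:ℝ) - (Real.sin t₁)^2 = (Real.cos t₁)^2 by
      linear_combination -Real.sin_sq_add_cos_sq t₁]
    exact Real.sqrt_sq hc1.le
  have hsq2 : Real.sqrt (1 - (Real.sin t₂)^2) = Real.cos t₂ := by
    rw [show (1:ℝ) - (Real.sin t₂)^2 = (Real.cos t₂)^2 by
      linear_combination -Real.sin_sq_add_cos_sq t₂]
    exact Real.sqrt_sq hc2.le
  have hA0 : A 0 = t₁ := by
    simp only [hA]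
    rw [hX00, hP0, Real.arcsin_sin h₁.1.le h₁.2.le]
  have hAT : A T = t₂ := by
    simp only [hA]
    rw [hX0T, hQ0, Real.arcsin_sin h₂.1.le h₂.2.le]
  have hB0 : B 0 = x₁ := by
    simp only [hB]
    rw [hX00, hX20, hP0, hP2, hsq1, mul_comm, mul_div_assoc,
      div_self (ne_of_gt hc1), mul_one, Real.arsinh_sinh]
  have hBT : B T = x₂ := by
    simp only [hB]
    rw [hX0T, hX2T, hQ0, hQ2, hsq2, mul_comm, mul_div_assoc,
      div_self (ne_of_gt hc2), mul_one, Real.arsinh_sinh]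
  -- strip membership
  have hmem : ∀ τ ∈ Icc (0:ℝ) T, A τ ∈ adsStrip := by
    intro τ hτ
    have hb := x0_bounds (hw τ hτ)
    constructor
    · simp only [hA]
      exact Real.neg_pi_div_two_lt_arcsin.2 hb.1
    · simp only [hA]
      exact Real.arcsin_lt_pi_div_two.2 hb.2
  -- causal conditions
  have hcausal : ∀ τ ∈ Icc (0:ℝ) T, 0 < deriv A τ ∧
      (Real.cos (A τ))^2 * (deriv B τ)^2 ≤ (deriv A τ)^2 := by
    intro τ hτ
    constructor
    · rw [hderivA τ hτ]
      exact div_pos (hY0pos τ hτ) (Real.sqrt_pos.2 (hw τ hτ))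
    · have h := hunit τ hτ
      linarith [h, sq_nonneg (deriv A τ)]
  -- length
  have hlen : lorLength Real.cos 0 T A B = T := by
    rw [lorLength]
    rw [intervalIntegral.integral_congr (g := fun _ => (1:ℝ)) (fun τ hτ => by
      rw [uIcc_of_le hT0.le] at hτ
      show Real.sqrt _ = 1
      rw [hunit τ hτ, Real.sqrt_one])]
    simp
  exact ⟨0, T, A, B,
    ⟨hT0, hmem, fun τ hτ => ⟨(hAd τ hτ).differentiableAt, (hBd τ hτ).differentiableAt⟩,
      hcausal⟩, hA0, hB0, hAT, hBT, by rw [hlen, hTdef]⟩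

lemma length_le_M {t₁ x₁ t₂ x₂ a b : ℝ} {α β : ℝ → ℝ} (h₁ : t₁ ∈ adsStrip)
    (hcc : IsCausalCurve adsStrip Real.cos a b α β)
    (ha1 : α a = t₁) (hb1 : β a = x₁) (ha2 : α b = t₂) (hb2 : β b = x₂) :
    lorLength Real.cos a b α β ≤
      Real.arccos (Real.sin t₁ * Real.sin t₂ +
        Real.cos t₁ * Real.cos t₂ * Real.cosh (x₂ - x₁)) := by
  set L := lorLength Real.cos a b α β with hL
  have key : ∀ t₀ ∈ Ioo (-(π/2)) t₁, L ≤
      Real.arccos (Real.sin t₀ * Real.sin t₂ + Real.cos t₀ * (Real.cos t₂ * Real.cosh (x₂ - x₁))) := by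
    intro t₀ ht₀
    have h := length_le_eps (t₀ := t₀) ⟨ht₀.1, ht₀.2.trans h₁.2⟩ ht₀.2 hcc ha1 hb1
    rwa [ha2, hb2] at h
  have hg : Continuous (fun t₀ : ℝ => Real.arccos (Real.sin t₀ * Real.sin t₂ +
      Real.cos t₀ * (Real.cos t₂ * Real.cosh (x₂ - x₁)))) := by
    apply Real.continuous_arccos.comp
    continuity
  have htend : Tendsto (fun t₀ : ℝ => Real.arccos (Real.sin t₀ * Real.sin t₂ +
      Real.cos t₀ * (Real.cos t₂ * Real.cosh (x₂ - x₁)))) (𝓝[<] t₁)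
      (𝓝 (Real.arccos (Real.sin t₁ * Real.sin t₂ +
        Real.cos t₁ * (Real.cos t₂ * Real.cosh (x₂ - x₁))))) :=
    (hg.tendsto t₁).mono_left nhdsWithin_le_nhds
  have hev : ∀ᶠ t₀ in 𝓝[<] t₁, L ≤ Real.arccos (Real.sin t₀ * Real.sin t₂ +
      Real.cos t₀ * (Real.cos t₂ * Real.cosh (x₂ - x₁))) := by
    filter_upwards [Ioo_mem_nhdsLT_of_mem ⟨h₁.1, le_refl t₁⟩] with t₀ ht₀
    exact key t₀ ht₀
  have := ge_of_tendsto htend hev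
  calc L ≤ _ := this
  _ = _ := by rw [mul_assoc]

/-- In `AdS' = (-π/2, π/2) ×_cos ℝ`, if `t₁ ≤ t₂` and `(t₁,x₁) ≤ (t₂,x₂)`, then the time
separation is `arccos (sin t₁ sin t₂ + cos t₁ cos t₂ cosh (x₂ - x₁))`. -/
theorem adsPrime_timeSep (t₁ x₁ t₂ x₂ : ℝ) (h₁ : t₁ ∈ adsStrip) (h₂ : t₂ ∈ adsStrip)
    (hle : t₁ ≤ t₂) (hc : causalRel adsStrip Real.cos (t₁, x₁) (t₂, x₂)) :
    timeSep adsStrip Real.cos (t₁, x₁) (t₂, x₂) =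
      Real.arccos (Real.sin t₁ * Real.sin t₂ +
        Real.cos t₁ * Real.cos t₂ * Real.cosh (x₂ - x₁)) := by
  set M := Real.arccos (Real.sin t₁ * Real.sin t₂ +
        Real.cos t₁ * Real.cos t₂ * Real.cosh (x₂ - x₁)) with hM
  set S := {L | ∃ a b α β, IsCausalCurve adsStrip Real.cos a b α β ∧
    α a = (t₁, x₁).1 ∧ β a = (t₁, x₁).2 ∧ α b = (t₂, x₂).1 ∧ β b = (t₂, x₂).2 ∧
    L = lorLength Real.cos a b α β} with hS
  have hub : ∀ L ∈ insert 0 S, L ≤ M := by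
    intro L hL
    rcases hL with h | h
    · rw [h]; exact Real.arccos_nonneg _
    · obtain ⟨a, b, α, β, hcc, ha1, hb1, ha2, hb2, hLeq⟩ := h
      rw [hLeq]
      exact length_le_M h₁ hcc ha1 hb1 ha2 hb2
  have hbdd : BddAbove (insert 0 S) := ⟨M, hub⟩
  have hne : (insert 0 S).Nonempty := ⟨0, mem_insert 0 S⟩
  apply le_antisymm
  · exact csSup_le hne hub
  · rcases lt_or_ge (Real.sin t₁ * Real.sin t₂ +
        Real.cos t₁ * Real.cos t₂ * Real.cosh (x₂ - x₁)) 1 with h | h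
    · obtain ⟨a, b, α, β, hcc, ha1, hb1, ha2, hb2, hLeq⟩ := exists_geodesic h₁ h₂ hle h
      have hmem : M ∈ insert 0 S := by
        right
        exact ⟨a, b, α, β, hcc, ha1, hb1, ha2, hb2, hLeq.symm⟩
      exact le_csSup hbdd hmem
    · have hM0 : M = 0 := Real.arccos_eq_zero.2 h
      rw [hM0]
      exact le_csSup hbdd (mem_insert 0 S)
end
end

section
/- In a Lorentzian warped product comparison space I ×_f ℝ (I ⊆ ℝ an open interval, f : I → (0,∞) continuous), any reparametrized null distance-realizing curve is of the form γ(t) = (t, x₀ ± ∫_{t₀}^t (1/f(λ)) dλ), and consequently two points (s,x) and (t,y) are causally related if and only if s ≤ t and |x - y| ≤ ∫_s^t (1/f(λ)) dλ, and timelike related if and only if both inequalities are strict. -/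
noncomputable section
open Real Set Filter

section AuxLemmas

open MeasureTheory

variable {I : Set ℝ} {f : ℝ → ℝ}

/-- `1/f` is interval integrable between points of `I`. -/
lemma auxIntInt (hIc : I.OrdConnected) (hf : ContinuousOn f I) (hfpos : ∀ t ∈ I, 0 < f t)
    {s t : ℝ} (hs : s ∈ I) (ht : t ∈ I) :
    IntervalIntegrable (fun l => 1 / f l) volume s t := by
  have hsub := hIc.uIcc_subset hs ht
  exact (continuousOn_const.div (hf.mono hsub)
    fun x hx => (hfpos x (hsub hx)).ne').intervalIntegrable

/-- The primitive of `1/f` has derivative `1/f` at points of `I`. -/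
lemma auxPrim (hIo : IsOpen I) (hIc : I.OrdConnected) (hf : ContinuousOn f I)
    (hfpos : ∀ t ∈ I, 0 < f t) {s u : ℝ} (hs : s ∈ I) (hu : u ∈ I) :
    HasDerivAt (fun v => ∫ l in s..v, 1 / f l) (1 / f u) u := by
  have hcont : ∀ x ∈ I, ContinuousAt (fun l => 1 / f l) x := fun x hx =>
    continuousAt_const.div (hf.continuousAt (hIo.mem_nhds hx)) (hfpos x hx).ne'
  exact intervalIntegral.integral_hasDerivAt_right (auxIntInt hIc hf hfpos hs hu)
    (ContinuousAt.stronglyMeasurableAtFilter hIo hcont u hu) (hcont u hu)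

lemma auxDeriv (hIo : IsOpen I) (hIc : I.OrdConnected) (hf : ContinuousOn f I)
    (hfpos : ∀ t ∈ I, 0 < f t) {a b : ℝ} {α β : ℝ → ℝ}
    (hC : IsCausalCurve I f a b α β) (ε : ℝ) {c : ℝ} (hcI : c ∈ I) :
    ∀ l ∈ Icc a b, HasDerivAt (fun l => (∫ u in c..(α l), 1 / f u) - ε * β l)
      ((deriv α l - ε * deriv β l * f (α l)) / f (α l)) l := by
  obtain ⟨hab, hmem, hdiff, hcau⟩ := hC
  intro l hl
  have h1 : HasDerivAt (fun v => ∫ u in c..v, 1 / f u) (1 / f (α l)) (α l) :=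
    auxPrim hIo hIc hf hfpos hcI (hmem l hl)
  have h2 := (h1.comp l (hdiff l hl).1.hasDerivAt).sub
    (((hdiff l hl).2.hasDerivAt).const_mul ε)
  convert h2 using 1
  case e'_5 => rfl
  case e'_8 => rfl
  case e'_4 => rfl
  have hfl := (hfpos _ (hmem l hl)).ne'
  field_simp

/-- The key monotone quantity `F ∘ α - ε β` along a causal curve. -/
lemma auxMono (hIo : IsOpen I) (hIc : I.OrdConnected) (hf : ContinuousOn f I)
    (hfpos : ∀ t ∈ I, 0 < f t) {a b : ℝ} {α β : ℝ → ℝ}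
    (hC : IsCausalCurve I f a b α β) {ε : ℝ} (hε : ε = 1 ∨ ε = -1) {c : ℝ} (hcI : c ∈ I) :
    MonotoneOn (fun l => (∫ u in c..(α l), 1 / f u) - ε * β l) (Icc a b) := by
  have hd := auxDeriv hIo hIc hf hfpos hC ε hcI
  obtain ⟨hab, hmem, hdiff, hcau⟩ := hC
  have hε2 : ε ^ 2 = 1 := by rcases hε with rfl | rfl <;> norm_num
  apply monotoneOn_of_deriv_nonneg (convex_Icc a b)
  · exact fun l hl => (hd l hl).differentiableAt.continuousAt.continuousWithinAt
  · rw [interior_Icc]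
    exact fun l hl => (hd l (Ioo_subset_Icc_self hl)).differentiableAt.differentiableWithinAt
  · rw [interior_Icc]
    intro l hl
    have hl' := Ioo_subset_Icc_self hl
    rw [(hd l hl').deriv]
    have hfl := hfpos _ (hmem l hl')
    have h1 := (hcau l hl').1
    have h2 := (hcau l hl').2
    apply div_nonneg _ hfl.le
    nlinarith [sq_nonneg (ε * deriv β l * f (α l) - deriv α l)]

lemma auxStrict (hIo : IsOpen I) (hIc : I.OrdConnected) (hf : ContinuousOn f I)
    (hfpos : ∀ t ∈ I, 0 < f t) {a b : ℝ} {α β : ℝ → ℝ}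
    (hC : IsCausalCurve I f a b α β)
    (hT : ∀ s ∈ Set.Icc a b, (f (α s)) ^ 2 * (deriv β s) ^ 2 < (deriv α s) ^ 2)
    {ε : ℝ} (hε : ε = 1 ∨ ε = -1) {c : ℝ} (hcI : c ∈ I) :
    StrictMonoOn (fun l => (∫ u in c..(α l), 1 / f u) - ε * β l) (Icc a b) := by
  have hd := auxDeriv hIo hIc hf hfpos hC ε hcI
  obtain ⟨hab, hmem, hdiff, hcau⟩ := hC
  have hε2 : ε ^ 2 = 1 := by rcases hε with rfl | rfl <;> norm_num
  apply strictMonoOn_of_deriv_pos (convex_Icc a b)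
  · exact fun l hl => (hd l hl).differentiableAt.continuousAt.continuousWithinAt
  · rw [interior_Icc]
    intro l hl
    have hl' := Ioo_subset_Icc_self hl
    rw [(hd l hl').deriv]
    have hfl := hfpos _ (hmem l hl')
    have h1 := (hcau l hl').1
    have h2 := hT l hl'
    apply div_pos _ hfl
    nlinarith [sq_nonneg (ε * deriv β l * f (α l) - deriv α l)]

/-- Forward causality bounds along a causal curve. -/
lemma causalBounds (hIo : IsOpen I) (hIc : I.OrdConnected) (hf : ContinuousOn f I)
    (hfpos : ∀ t ∈ I, 0 < f t) {a b : ℝ} {α β : ℝ → ℝ}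
    (hC : IsCausalCurve I f a b α β) :
    α a < α b ∧ |β a - β b| ≤ ∫ l in (α a)..(α b), 1 / f l := by
  obtain ⟨hab, hmem, hdiff, hcau⟩ := id hC
  have hma : a ∈ Icc a b := left_mem_Icc.mpr hab.le
  have hmb : b ∈ Icc a b := right_mem_Icc.mpr hab.le
  have haI : α a ∈ I := hmem a hma
  have hαlt : α a < α b := by
    have hsm : StrictMonoOn α (Icc a b) := strictMonoOn_of_deriv_pos (convex_Icc a b)
      (fun l hl => (hdiff l hl).1.continuousAt.continuousWithinAt)
      (by rw [interior_Icc]; exact fun l hl => (hcau l (Ioo_subset_Icc_self hl)).1)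
    exact hsm hma hmb hab
  refine ⟨hαlt, ?_⟩
  have key : ∀ ε : ℝ, ε = 1 ∨ ε = -1 → ε * β b - ε * β a ≤ ∫ l in (α a)..(α b), 1 / f l := by
    intro ε hε
    have hm := auxMono hIo hIc hf hfpos hC hε haI hma hmb hab.le
    simp only [intervalIntegral.integral_same] at hm
    linarith
  rw [abs_sub_le_iff]
  constructor
  · have := key (-1) (Or.inr rfl); linarith
  · have := key 1 (Or.inl rfl); linarith

/-- Forward chronology bounds along a timelike curve. -/
lemma timelikeBounds (hIo : IsOpen I) (hIc : I.OrdConnected) (hf : ContinuousOn f I)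
    (hfpos : ∀ t ∈ I, 0 < f t) {a b : ℝ} {α β : ℝ → ℝ}
    (hC : IsCausalCurve I f a b α β)
    (hT : ∀ s ∈ Set.Icc a b, (f (α s)) ^ 2 * (deriv β s) ^ 2 < (deriv α s) ^ 2) :
    α a < α b ∧ |β a - β b| < ∫ l in (α a)..(α b), 1 / f l := by
  obtain ⟨hab, hmem, hdiff, hcau⟩ := id hC
  have hma : a ∈ Icc a b := left_mem_Icc.mpr hab.le
  have hmb : b ∈ Icc a b := right_mem_Icc.mpr hab.le
  have haI : α a ∈ I := hmem a hma
  refine ⟨(causalBounds hIo hIc hf hfpos hC).1, ?_⟩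
  have key : ∀ ε : ℝ, ε = 1 ∨ ε = -1 → ε * β b - ε * β a < ∫ l in (α a)..(α b), 1 / f l := by
    intro ε hε
    have hm := auxStrict hIo hIc hf hfpos hC hT hε haI hma hmb hab
    simp only [intervalIntegral.integral_same] at hm
    linarith
  rw [abs_sub_lt_iff]
  constructor
  · have := key (-1) (Or.inr rfl); linarith
  · have := key 1 (Or.inl rfl); linarith

/-- Construction of the curve `l ↦ (l, x + c ∫ 1/f)` for `|c| ≤ 1`. -/
lemma buildCurve (hIo : IsOpen I) (hIc : I.OrdConnected) (hf : ContinuousOn f I)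
    (hfpos : ∀ t ∈ I, 0 < f t) {s t : ℝ} (hs : s ∈ I) (ht : t ∈ I) (hst : s < t)
    (x c : ℝ) (hc : c ^ 2 ≤ 1) :
    IsCausalCurve I f s t id (fun l => x + c * ∫ u in s..l, 1 / f u) ∧
    (c ^ 2 < 1 → ∀ l ∈ Icc s t,
      (f (id l)) ^ 2 * (deriv (fun l => x + c * ∫ u in s..l, 1 / f u) l) ^ 2
        < (deriv (id : ℝ → ℝ) l) ^ 2) ∧
    lorLength f s t id (fun l => x + c * ∫ u in s..l, 1 / f u)
      = (t - s) * Real.sqrt (1 - c ^ 2) := by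
  have hsub : Icc s t ⊆ I := hIc.out hs ht
  have hder : ∀ l ∈ Icc s t,
      HasDerivAt (fun l => x + c * ∫ u in s..l, 1 / f u) (c * (1 / f l)) l := fun l hl =>
    ((auxPrim hIo hIc hf hfpos hs (hsub hl)).const_mul c).const_add x
  have hdeq : ∀ l ∈ Icc s t, deriv (fun l => x + c * ∫ u in s..l, 1 / f u) l = c * (1 / f l) :=
    fun l hl => (hder l hl).deriv
  have hkey : ∀ l ∈ Icc s t,
      (f (id l)) ^ 2 * (deriv (fun l => x + c * ∫ u in s..l, 1 / f u) l) ^ 2 = c ^ 2 := by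
    intro l hl
    rw [hdeq l hl]
    have hfl := (hfpos l (hsub hl)).ne'
    simp only [id_eq]
    field_simp
  refine ⟨⟨hst, fun l hl => hsub hl,
      fun l hl => ⟨differentiableAt_id, (hder l hl).differentiableAt⟩,
      fun l hl => ?_⟩, fun hlt l hl => ?_, ?_⟩
  · rw [hkey l hl]
    constructor
    · simp [deriv_id]
    · simp only [deriv_id]; linarith [hc]
  · rw [hkey l hl]
    simp only [deriv_id]
    linarith [hlt]
  · unfold lorLength
    rw [intervalIntegral.integral_congr (g := fun _ => Real.sqrt (1 - c ^ 2)) ?_,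
      intervalIntegral.integral_const, smul_eq_mul]
    intro l hl
    rw [uIcc_of_le hst.le] at hl
    simp only
    rw [hkey l hl, deriv_id]
    norm_num

/-- Any causal curve has Lorentzian length at most the increment of the time coordinate. -/
lemma lengthBound {a b : ℝ} {α β : ℝ → ℝ} (hC : IsCausalCurve I f a b α β) :
    lorLength f a b α β ≤ α b - α a := by
  obtain ⟨hab, hmem, hdiff, hcau⟩ := hC
  set φ := fun u => Real.sqrt ((deriv α u) ^ 2 - (f (α u)) ^ 2 * (deriv β u) ^ 2) with hφ
  by_cases hint : IntervalIntegrable φ volume a b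
  · have hle := intervalIntegral.integral_le_sub_of_hasDeriv_right_of_le (g := α) (φ := φ)
      hab.le
      (fun l hl => (hdiff l hl).1.continuousAt.continuousWithinAt)
      (fun l hl => ((hdiff l (Ioo_subset_Icc_self hl)).1.hasDerivAt).hasDerivWithinAt)
      ((intervalIntegrable_iff_integrableOn_Icc_of_le hab.le).mp hint)
      (fun l hl => ?_)
    · exact hle
    · have hl' := Ioo_subset_Icc_self hl
      calc φ l ≤ Real.sqrt ((deriv α l) ^ 2) := by
              apply Real.sqrt_le_sqrt
              have : 0 ≤ (f (α l)) ^ 2 * (deriv β l) ^ 2 := by positivity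
              linarith
        _ = deriv α l := by rw [Real.sqrt_sq (hcau l hl').1.le]
  · have h0 : lorLength f a b α β = 0 := intervalIntegral.integral_undef hint
    rw [h0]
    have := strictMonoOn_of_deriv_pos (convex_Icc a b)
      (fun l hl => (hdiff l hl).1.continuousAt.continuousWithinAt)
      (by rw [interior_Icc]; exact fun l hl => (hcau l (Ioo_subset_Icc_self hl)).1)
      (left_mem_Icc.mpr hab.le) (right_mem_Icc.mpr hab.le) hab
    linarith

end AuxLemmas

/-- In a Lorentzian warped product comparison space `I ×_f ℝ` (`I` an open interval,
`f` continuous and positive on `I`): every null distance realizer, reparametrized by the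
`t`-coordinate, is of the form `t ↦ (t, β a ± ∫_a^t 1/f)`; consequently `(s,x) ≤ (t,y)`
iff `s ≤ t` and `|x - y| ≤ ∫_s^t 1/f`, and `(s,x) ≪ (t,y)` iff both inequalities are
strict. -/
theorem comparisonSpace_null_realizers_and_causality
    (I : Set ℝ) (hIo : IsOpen I) (hIc : I.OrdConnected)
    (f : ℝ → ℝ) (hf : ContinuousOn f I) (hfpos : ∀ t ∈ I, 0 < f t) :
    (∀ a b (β : ℝ → ℝ), IsCausalCurve I f a b id β →
        timeSep I f (a, β a) (b, β b) = 0 →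
        (∀ t ∈ Set.Icc a b, β t = β a + ∫ l in a..t, 1 / f l) ∨
        (∀ t ∈ Set.Icc a b, β t = β a - ∫ l in a..t, 1 / f l)) ∧
    (∀ s x t y, s ∈ I → t ∈ I →
        (causalRel I f (s, x) (t, y) ↔ s ≤ t ∧ |x - y| ≤ ∫ l in s..t, 1 / f l) ∧
        (chronRel I f (s, x) (t, y) ↔ s < t ∧ |x - y| < ∫ l in s..t, 1 / f l)) := by
  constructor
  · -- Part 1: null realizers
    intro a b β hC hzero
    obtain ⟨hab, hmem, hdiff, hcau⟩ := id hC
    have hma : a ∈ Icc a b := left_mem_Icc.mpr hab.le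
    have hmb : b ∈ Icc a b := right_mem_Icc.mpr hab.le
    have haI : a ∈ I := hmem a hma
    have hbI : b ∈ I := hmem b hmb
    have hsub : Icc a b ⊆ I := hIc.out haI hbI
    have hD : 0 < ∫ l in a..b, 1 / f l :=
      intervalIntegral.intervalIntegral_pos_of_pos_on (auxIntInt hIc hf hfpos haI hbI)
        (fun u hu => by have := hfpos u (hsub ⟨hu.1.le, hu.2.le⟩); positivity) hab
    have habs : |β a - β b| ≤ ∫ l in a..b, 1 / f l := by
      have h := (causalBounds hIo hIc hf hfpos hC).2
      simpa using h
    have heq : |β b - β a| = ∫ l in a..b, 1 / f l := by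
      by_contra hne
      have hlt : |β b - β a| < ∫ l in a..b, 1 / f l :=
        lt_of_le_of_ne (by rwa [abs_sub_comm] at habs) hne
      have hc2 : ((β b - β a) / ∫ l in a..b, 1 / f l) ^ 2 < 1 := by
        rw [div_pow, div_lt_one (by positivity)]
        nlinarith [sq_abs (β b - β a), abs_nonneg (β b - β a)]
      obtain ⟨hcu, htl, hLeq⟩ := buildCurve hIo hIc hf hfpos haI hbI hab (β a)
        ((β b - β a) / ∫ l in a..b, 1 / f l) hc2.le
      have hβ'a : (fun l => β a + ((β b - β a) / ∫ l in a..b, 1 / f l) *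
          ∫ u in a..l, 1 / f u) a = β a := by
        simp [intervalIntegral.integral_same]
      have hβ'b : (fun l => β a + ((β b - β a) / ∫ l in a..b, 1 / f l) *
          ∫ u in a..l, 1 / f u) b = β b := by
        simp only
        rw [div_mul_cancel₀ _ hD.ne']
        ring
      have hLpos : 0 < lorLength f a b id
          (fun l => β a + ((β b - β a) / ∫ l in a..b, 1 / f l) * ∫ u in a..l, 1 / f u) := by
        rw [hLeq]
        exact mul_pos (by linarith) (Real.sqrt_pos.mpr (by linarith))
      have hle0 : lorLength f a b id
          (fun l => β a + ((β b - β a) / ∫ l in a..b, 1 / f l) * ∫ u in a..l, 1 / f u)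
            ≤ timeSep I f (a, β a) (b, β b) := by
        unfold timeSep
        apply le_csSup
        · refine ⟨max (b - a) 0, ?_⟩
          intro L hL
          rcases Set.mem_insert_iff.mp hL with rfl |
            ⟨a', b', α', β'', hC', h1, h2, h3, h4, rfl⟩
          · exact le_max_right _ _
          · have hlb := lengthBound hC'
            rw [h1, h3] at hlb
            exact le_trans hlb (le_max_left _ _)
        · exact Set.mem_insert_of_mem _ ⟨a, b, id, _, hcu, rfl, hβ'a, rfl, hβ'b, rfl⟩
      rw [hzero] at hle0
      linarith
    rcases (abs_eq hD.le).mp heq with hpm | hpm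
    · left
      intro t' ht'
      have hm := auxMono hIo hIc hf hfpos hC (Or.inl rfl : (1:ℝ) = 1 ∨ (1:ℝ) = -1) haI
      have h1 := hm hma ht' ht'.1
      have h2 := hm ht' hmb ht'.2
      simp only [id_eq, intervalIntegral.integral_same] at h1 h2
      linarith
    · right
      intro t' ht'
      have hm := auxMono hIo hIc hf hfpos hC (Or.inr rfl : (-1:ℝ) = 1 ∨ (-1:ℝ) = -1) haI
      have h1 := hm hma ht' ht'.1
      have h2 := hm ht' hmb ht'.2
      simp only [id_eq, intervalIntegral.integral_same] at h1 h2
      linarith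
  · -- Part 2: causality characterization
    intro s x t y hsI htI
    constructor
    · constructor
      · rintro (heq | ⟨a, b, α, β, hCur, ha1, ha2, hb1, hb2⟩)
        · simp only [Prod.mk.injEq] at heq
          obtain ⟨rfl, rfl⟩ := heq
          exact ⟨le_rfl, by simp⟩
        · obtain ⟨hlt, hle⟩ := causalBounds hIo hIc hf hfpos hCur
          have ha1' : α a = s := ha1
          have ha2' : β a = x := ha2
          have hb1' : α b = t := hb1
          have hb2' : β b = y := hb2
          rw [ha1', hb1'] at hlt
          rw [ha1', hb1', ha2', hb2'] at hle
          exact ⟨hlt.le, hle⟩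
      · rintro ⟨hst, hxy⟩
        rcases eq_or_lt_of_le hst with rfl | hlt
        · left
          have h0 : |x - y| ≤ 0 := by simpa using hxy
          have hx : x - y = 0 := abs_eq_zero.mp (le_antisymm h0 (abs_nonneg _))
          have : x = y := by linarith
          rw [this]
        · right
          have hsub : Icc s t ⊆ I := hIc.out hsI htI
          have hD : 0 < ∫ l in s..t, 1 / f l :=
            intervalIntegral.intervalIntegral_pos_of_pos_on (auxIntInt hIc hf hfpos hsI htI)
              (fun u hu => by have := hfpos u (hsub ⟨hu.1.le, hu.2.le⟩); positivity) hlt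
          have hc2 : ((y - x) / ∫ l in s..t, 1 / f l) ^ 2 ≤ 1 := by
            rw [div_pow, div_le_one (by positivity)]
            nlinarith [sq_abs (x - y), abs_nonneg (x - y)]
          obtain ⟨hcu, _, _⟩ := buildCurve hIo hIc hf hfpos hsI htI hlt x
            ((y - x) / ∫ l in s..t, 1 / f l) hc2
          refine ⟨s, t, id, _, hcu, rfl, by simp, rfl, ?_⟩
          show x + ((y - x) / ∫ l in s..t, 1 / f l) * (∫ u in s..t, 1 / f u) = y
          rw [div_mul_cancel₀ _ hD.ne']
          ring
    · constructor
      · rintro ⟨a, b, α, β, ⟨hCur, hT⟩, ha1, ha2, hb1, hb2⟩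
        obtain ⟨hlt, hle⟩ := timelikeBounds hIo hIc hf hfpos hCur hT
        have ha1' : α a = s := ha1
        have ha2' : β a = x := ha2
        have hb1' : α b = t := hb1
        have hb2' : β b = y := hb2
        rw [ha1', hb1'] at hlt
        rw [ha1', hb1', ha2', hb2'] at hle
        exact ⟨hlt, hle⟩
      · rintro ⟨hst, hxy⟩
        have hsub : Icc s t ⊆ I := hIc.out hsI htI
        have hD : 0 < ∫ l in s..t, 1 / f l :=
          intervalIntegral.intervalIntegral_pos_of_pos_on (auxIntInt hIc hf hfpos hsI htI)
            (fun u hu => by have := hfpos u (hsub ⟨hu.1.le, hu.2.le⟩); positivity) hst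
        have hc2 : ((y - x) / ∫ l in s..t, 1 / f l) ^ 2 < 1 := by
          rw [div_pow, div_lt_one (by positivity)]
          nlinarith [sq_abs (x - y), abs_nonneg (x - y)]
        obtain ⟨hcu, htl, _⟩ := buildCurve hIo hIc hf hfpos hsI htI hst x
          ((y - x) / ∫ l in s..t, 1 / f l) hc2.le
        refine ⟨s, t, id, _, ⟨hcu, htl hc2⟩, rfl, by simp, rfl, ?_⟩
        show x + ((y - x) / ∫ l in s..t, 1 / f l) * (∫ u in s..t, 1 / f u) = y
        rw [div_mul_cancel₀ _ hD.ne']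
        ring
end
end

section
/- Let f : I → (0,∞) be continuous on an open interval I ⊆ ℝ. Then the Lorentzian warped product comparison space I ×_f ℝ is globally hyperbolic: every causal diamond J(p,q) = J⁺(p) ∩ J⁻(q) is compact, and the space is non-totally imprisoning. -/
noncomputable section
open Real Set Filter

/-- The causal diamond `J(p,q) = J⁺(p) ∩ J⁻(q)` in `I ×_f ℝ`. -/
def cmpDiamond (I : Set ℝ) (f : ℝ → ℝ) (p q : ℝ × ℝ) : Set (ℝ × ℝ) :=
  {r | r.1 ∈ I ∧ causalRel I f p r ∧ causalRel I f r q}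

namespace CmpAux

variable {I : Set ℝ} {f : ℝ → ℝ} {a b : ℝ} {α β : ℝ → ℝ}

lemma alpha_strictMono (h : IsCausalCurve I f a b α β) : StrictMonoOn α (Icc a b) := by
  apply strictMonoOn_of_deriv_pos (convex_Icc a b)
  · exact fun s hs => ((h.2.2.1 s hs).1.continuousAt).continuousWithinAt
  · rw [interior_Icc]
    exact fun s hs => (h.2.2.2 s (Ioo_subset_Icc_self hs)).1

lemma deriv_bound (hfpos : ∀ t ∈ I, 0 < f t) (h : IsCausalCurve I f a b α β) :
    ∀ s ∈ Icc a b, |deriv β s| * f (α s) ≤ deriv α s := by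
  intro s hs
  have hf0 : 0 < f (α s) := hfpos _ (h.2.1 s hs)
  have ha0 : 0 < deriv α s := (h.2.2.2 s hs).1
  have hsq : (|deriv β s| * f (α s)) ^ 2 ≤ (deriv α s) ^ 2 := by
    calc (|deriv β s| * f (α s)) ^ 2 = f (α s) ^ 2 * (deriv β s) ^ 2 := by
          rw [mul_pow, sq_abs]; ring
      _ ≤ (deriv α s) ^ 2 := (h.2.2.2 s hs).2
  exact (abs_le_of_sq_le_sq' hsq ha0.le).2

lemma monoOn_of_hasDerivAt {h h' : ℝ → ℝ} {a b : ℝ}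
    (hd : ∀ s ∈ Icc a b, HasDerivAt h (h' s) s) (hpos : ∀ s ∈ Icc a b, 0 ≤ h' s) :
    MonotoneOn h (Icc a b) := by
  apply monotoneOn_of_deriv_nonneg (convex_Icc a b)
  · exact fun s hs => ((hd s hs).continuousAt).continuousWithinAt
  · rw [interior_Icc]
    exact fun s hs =>
      ((hd s (Ioo_subset_Icc_self hs)).differentiableAt).differentiableWithinAt
  · rw [interior_Icc]
    intro s hs
    rw [(hd s (Ioo_subset_Icc_self hs)).deriv]
    exact hpos s (Ioo_subset_Icc_self hs)

lemma beta_est {G g : ℝ → ℝ} (h : IsCausalCurve I f a b α β)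
    (hG : ∀ s ∈ Icc a b, HasDerivAt G (g (α s)) (α s))
    (hdom : ∀ s ∈ Icc a b, |deriv β s| ≤ g (α s) * deriv α s) :
    ∀ ⦃s1⦄, s1 ∈ Icc a b → ∀ ⦃s2⦄, s2 ∈ Icc a b → s1 ≤ s2 →
      |β s2 - β s1| ≤ G (α s2) - G (α s1) := by
  have hcomp : ∀ s ∈ Icc a b, HasDerivAt (fun u => G (α u)) (g (α s) * deriv α s) s :=
    fun s hs => (hG s hs).comp s ((h.2.2.1 s hs).1.hasDerivAt)
  have hplus : MonotoneOn (fun u => G (α u) + β u) (Icc a b) := by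
    apply monoOn_of_hasDerivAt (h' := fun s => g (α s) * deriv α s + deriv β s)
      (fun s hs => (hcomp s hs).add ((h.2.2.1 s hs).2.hasDerivAt))
    intro s hs
    have h1 := hdom s hs
    have h2 := neg_abs_le (deriv β s)
    linarith
  have hminus : MonotoneOn (fun u => G (α u) - β u) (Icc a b) := by
    apply monoOn_of_hasDerivAt (h' := fun s => g (α s) * deriv α s - deriv β s)
      (fun s hs => (hcomp s hs).sub ((h.2.2.1 s hs).2.hasDerivAt))
    intro s hs
    have h1 := hdom s hs
    have h2 := le_abs_self (deriv β s)
    linarith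
  intro s1 hs1 s2 hs2 hle
  have hp := hplus hs1 hs2 hle
  have hm := hminus hs1 hs2 hle
  simp only at hp hm
  rw [abs_le]
  constructor <;> linarith

lemma beta_est_F {F : ℝ → ℝ} (hfpos : ∀ t ∈ I, 0 < f t)
    (hF : ∀ t ∈ I, HasDerivAt F (f t)⁻¹ t) (h : IsCausalCurve I f a b α β) :
    ∀ ⦃s1⦄, s1 ∈ Icc a b → ∀ ⦃s2⦄, s2 ∈ Icc a b → s1 ≤ s2 →
      |β s2 - β s1| ≤ F (α s2) - F (α s1) := by
  apply beta_est (g := fun t => (f t)⁻¹) h (fun s hs => hF _ (h.2.1 s hs))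
  intro s hs
  have hf0 : 0 < f (α s) := hfpos _ (h.2.1 s hs)
  rw [inv_mul_eq_div, le_div_iff₀ hf0]
  exact deriv_bound hfpos h s hs

lemma beta_est_m {m : ℝ} (hfpos : ∀ t ∈ I, 0 < f t) (hm : 0 < m)
    (hmf : ∀ s ∈ Icc a b, m ≤ f (α s)) (h : IsCausalCurve I f a b α β) :
    ∀ ⦃s1⦄, s1 ∈ Icc a b → ∀ ⦃s2⦄, s2 ∈ Icc a b → s1 ≤ s2 →
      |β s2 - β s1| ≤ m⁻¹ * α s2 - m⁻¹ * α s1 := by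
  apply beta_est (G := fun t => m⁻¹ * t) (g := fun _ => m⁻¹) h
    (fun s _ => by simpa using (hasDerivAt_id (α s)).const_mul m⁻¹)
  intro s hs
  have hb := deriv_bound hfpos h s hs
  have h1 : |deriv β s| * m ≤ deriv α s := by
    calc |deriv β s| * m ≤ |deriv β s| * f (α s) :=
          mul_le_mul_of_nonneg_left (hmf s hs) (abs_nonneg _)
      _ ≤ deriv α s := hb
  rw [inv_mul_eq_div, le_div_iff₀ hm]
  exact h1

lemma causal_lt {p r : ℝ × ℝ} (h : causalRel I f p r) : p = r ∨ p.1 < r.1 := by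
  rcases h with h | ⟨a, b, α, β, hc, ha1, _, hb1, _⟩
  · exact Or.inl h
  · right
    rw [← ha1, ← hb1]
    exact alpha_strictMono hc (left_mem_Icc.2 hc.1.le) (right_mem_Icc.2 hc.1.le) hc.1

lemma causal_est {F : ℝ → ℝ} (hfpos : ∀ t ∈ I, 0 < f t)
    (hF : ∀ t ∈ I, HasDerivAt F (f t)⁻¹ t) {p r : ℝ × ℝ} (h : causalRel I f p r) :
    p.1 ≤ r.1 ∧ |r.2 - p.2| ≤ F r.1 - F p.1 := by
  rcases h with rfl | ⟨a, b, α, β, hc, ha1, ha2, hb1, hb2⟩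
  · simp
  · have hab : a ∈ Icc a b := left_mem_Icc.2 hc.1.le
    have hbb : b ∈ Icc a b := right_mem_Icc.2 hc.1.le
    constructor
    · rw [← ha1, ← hb1]
      exact (alpha_strictMono hc hab hbb hc.1).le
    · have := beta_est_F hfpos hF hc hab hbb hc.1.le
      rwa [ha1, ha2, hb1, hb2] at this

lemma construct_causal (hIc : I.OrdConnected) (hfpos : ∀ t ∈ I, 0 < f t) {F : ℝ → ℝ}
    (hF : ∀ t ∈ I, HasDerivAt F (f t)⁻¹ t) {p r : ℝ × ℝ}
    (hp : p.1 ∈ I) (hr : r.1 ∈ I) (h1 : p.1 < r.1) (h2 : |r.2 - p.2| ≤ F r.1 - F p.1) :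
    causalRel I f p r := by
  have hsub : Icc p.1 r.1 ⊆ I := hIc.out hp hr
  have hFmono : StrictMonoOn F (Icc p.1 r.1) := by
    apply strictMonoOn_of_deriv_pos (convex_Icc _ _)
    · exact fun t ht => ((hF t (hsub ht)).continuousAt).continuousWithinAt
    · rw [interior_Icc]
      intro t ht
      rw [(hF t (hsub (Ioo_subset_Icc_self ht))).deriv]
      exact inv_pos.2 (hfpos t (hsub (Ioo_subset_Icc_self ht)))
  have hΔ : 0 < F r.1 - F p.1 :=
    sub_pos.2 (hFmono (left_mem_Icc.2 h1.le) (right_mem_Icc.2 h1.le) h1)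
  set c := (r.2 - p.2) / (F r.1 - F p.1) with hc
  have hc1 : |c| ≤ 1 := by
    rw [hc, abs_div, abs_of_pos hΔ, div_le_one hΔ]
    exact h2
  have hβd : ∀ s ∈ Icc p.1 r.1,
      HasDerivAt (fun t => p.2 + c * (F t - F p.1)) (c * (f s)⁻¹) s :=
    fun s hs => (((hF s (hsub hs)).sub_const (F p.1)).const_mul c).const_add p.2
  refine Or.inr ⟨p.1, r.1, fun t => t, fun t => p.2 + c * (F t - F p.1), ?_, rfl, ?_, rfl, ?_⟩
  · refine ⟨h1, fun s hs => hsub hs, fun s hs => ⟨differentiableAt_id, ((hβd s hs).differentiableAt)⟩,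
      fun s hs => ?_⟩
    have hd1 : deriv (fun t : ℝ => t) s = 1 := by simp
    have hd2 : deriv (fun t => p.2 + c * (F t - F p.1)) s = c * (f s)⁻¹ := (hβd s hs).deriv
    have hfs : f s ≠ 0 := (hfpos s (hsub hs)).ne'
    rw [hd1, hd2]
    constructor
    · norm_num
    · have : f s ^ 2 * (c * (f s)⁻¹) ^ 2 = c ^ 2 := by
        field_simp
      rw [this]
      simpa using (sq_le_one_iff_abs_le_one c).2 hc1
  · simp
  · show p.2 + c * (F r.1 - F p.1) = r.2
    rw [hc, div_mul_cancel₀ _ hΔ.ne']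
    ring

end CmpAux

theorem comparisonSpace_globallyHyperbolic'
    (I : Set ℝ) (hIo : IsOpen I) (hIc : I.OrdConnected)
    (f : ℝ → ℝ) (hf : ContinuousOn f I) (hfpos : ∀ t ∈ I, 0 < f t) :
    (∀ p q : ℝ × ℝ, p.1 ∈ I → q.1 ∈ I → IsCompact ({r | r.1 ∈ I ∧ causalRel I f p r ∧ causalRel I f r q} : Set (ℝ × ℝ))) := by
  intro p q hp hq
  by_cases hpq : p.1 < q.1
  swap
  · -- degenerate case
    have hle : q.1 ≤ p.1 := not_lt.1 hpq
    have hsub1 : {r : ℝ × ℝ | r.1 ∈ I ∧ causalRel I f p r ∧ causalRel I f r q} ⊆ {p} := by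
      rintro r ⟨hrI, h1, h2⟩
      rcases CmpAux.causal_lt h1 with rfl | hlt1
      · exact Set.mem_singleton _
      · rcases CmpAux.causal_lt h2 with rfl | hlt2
        · exact absurd hlt1 (by simp; linarith)
        · exact absurd hlt1 (by simp; linarith)
    exact ((Set.finite_singleton p).subset hsub1).isCompact
  -- main case
  have hsub : Icc p.1 q.1 ⊆ I := hIc.out hp hq
  set F : ℝ → ℝ := fun t => ∫ u in p.1..t, (f u)⁻¹ with hFdef
  have hfinv : ContinuousOn (fun u => (f u)⁻¹) I := hf.inv₀ fun t ht => (hfpos t ht).ne'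
  have hF : ∀ t ∈ I, HasDerivAt F (f t)⁻¹ t := by
    intro t ht
    have hsub' : uIcc p.1 t ⊆ I := hIc.uIcc_subset hp ht
    have hint : IntervalIntegrable (fun u => (f u)⁻¹) MeasureTheory.volume p.1 t :=
      (hfinv.mono hsub').intervalIntegrable
    have hmeas := hfinv.stronglyMeasurableAtFilter (μ := MeasureTheory.volume) hIo t ht
    exact intervalIntegral.integral_hasDerivAt_right hint hmeas
      (hfinv.continuousAt (hIo.mem_nhds ht))
  have hFmono : MonotoneOn F (Icc p.1 q.1) := by
    apply (strictMonoOn_of_deriv_pos (convex_Icc _ _) ?_ ?_).monotoneOn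
    · exact fun t ht => ((hF t (hsub ht)).continuousAt).continuousWithinAt
    · rw [interior_Icc]
      intro t ht
      rw [(hF t (hsub (Ioo_subset_Icc_self ht))).deriv]
      exact inv_pos.2 (hfpos t (hsub (Ioo_subset_Icc_self ht)))
  set S : Set (ℝ × ℝ) :=
    {r | r.1 ∈ Icc p.1 q.1 ∧ |r.2 - p.2| ≤ F r.1 - F p.1 ∧ |q.2 - r.2| ≤ F q.1 - F r.1}
    with hSdef
  have hset : {r : ℝ × ℝ | r.1 ∈ I ∧ causalRel I f p r ∧ causalRel I f r q} = S := by
    ext r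
    constructor
    · rintro ⟨hrI, h1, h2⟩
      obtain ⟨hA1, hA2⟩ := CmpAux.causal_est hfpos hF h1
      obtain ⟨hB1, hB2⟩ := CmpAux.causal_est hfpos hF h2
      exact ⟨⟨hA1, hB1⟩, hA2, hB2⟩
    · rintro ⟨hrIcc, h2, h3⟩
      refine ⟨hsub hrIcc, ?_, ?_⟩
      · rcases eq_or_lt_of_le hrIcc.1 with heq | hlt
        · left
          have : |r.2 - p.2| ≤ 0 := by rw [← heq] at h2; simpa using h2
          have h22 : r.2 = p.2 := by
            have := abs_nonpos_iff.1 this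
            linarith [sub_eq_zero.1 this]
          exact Prod.ext heq h22.symm
        · exact CmpAux.construct_causal hIc hfpos hF hp (hsub hrIcc) hlt h2
      · rcases eq_or_lt_of_le hrIcc.2 with heq | hlt
        · left
          have : |q.2 - r.2| ≤ 0 := by rw [heq] at h3; simpa using h3
          have h22 : q.2 = r.2 := by
            have := abs_nonpos_iff.1 this
            linarith [sub_eq_zero.1 this]
          exact Prod.ext heq h22.symm
        · exact CmpAux.construct_causal hIc hfpos hF (hsub hrIcc) hq hlt h3
  rw [hset]
  -- compactness of S
  set clamp : ℝ → ℝ := fun t => max p.1 (min t q.1) with hclampdef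
  have hclampmem : ∀ t, clamp t ∈ Icc p.1 q.1 := by
    intro t
    constructor
    · exact le_max_left _ _
    · exact max_le hpq.le (min_le_right _ _)
  have hclampcont : Continuous clamp := by fun_prop
  have hFc : ContinuousOn F (Icc p.1 q.1) :=
    fun t ht => ((hF t (hsub ht)).continuousAt).continuousWithinAt
  set Φ : ℝ → ℝ := fun t => F (clamp t) with hΦdef
  have hΦcont : Continuous Φ := hFc.comp_continuous hclampcont hclampmem
  have hΦ : ∀ t ∈ Icc p.1 q.1, Φ t = F t := by
    intro t ht
    have : clamp t = t := by
      rw [hclampdef]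
      simp only
      rw [min_eq_left ht.2, max_eq_right ht.1]
    rw [hΦdef]; simp only; rw [this]
  have hΦp : Φ p.1 = F p.1 := hΦ _ (left_mem_Icc.2 hpq.le)
  have hΦq : Φ q.1 = F q.1 := hΦ _ (right_mem_Icc.2 hpq.le)
  have hcl : IsClosed S := by
    have : S = ((fun r : ℝ × ℝ => r.1) ⁻¹' Icc p.1 q.1) ∩
        ({r : ℝ × ℝ | |r.2 - p.2| ≤ Φ r.1 - Φ p.1} ∩
         {r : ℝ × ℝ | |q.2 - r.2| ≤ Φ q.1 - Φ r.1}) := by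
      ext r
      simp only [hSdef,mem_setOf_eq, mem_inter_iff, mem_preimage]
      constructor
      · rintro ⟨h1, h2, h3⟩
        exact ⟨h1, by rw [hΦp, hΦ _ h1]; exact h2, by rw [hΦq, hΦ _ h1]; exact h3⟩
      · rintro ⟨h1, h2, h3⟩
        rw [hΦp, hΦ _ h1] at h2
        rw [hΦq, hΦ _ h1] at h3
        exact ⟨h1, h2, h3⟩
    rw [this]
    refine (isClosed_Icc.preimage continuous_fst).inter (IsClosed.inter ?_ ?_)
    · exact isClosed_le (by fun_prop) (by fun_prop)
    · exact isClosed_le (by fun_prop) (by fun_prop)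
  have hbox : S ⊆ (Icc p.1 q.1) ×ˢ
      (Icc (p.2 - (F q.1 - F p.1)) (p.2 + (F q.1 - F p.1))) := by
    rintro r ⟨h1, h2, _⟩
    refine ⟨h1, ?_⟩
    have hFr : F r.1 ≤ F q.1 := hFmono h1 (right_mem_Icc.2 hpq.le) h1.2
    have := abs_le.1 h2
    constructor <;> [linarith [this.1]; linarith [this.2]]
  exact IsCompact.of_isClosed_subset (isCompact_Icc.prod isCompact_Icc) hcl hbox

theorem part2'
    (I : Set ℝ) (hIo : IsOpen I) (hIc : I.OrdConnected)
    (f : ℝ → ℝ) (hf : ContinuousOn f I) (hfpos : ∀ t ∈ I, 0 < f t) :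
    (∀ K : Set (ℝ × ℝ), IsCompact K → K ⊆ I ×ˢ (Set.univ : Set ℝ) →
      ∃ C : ℝ, ∀ a b α β, IsCausalCurve I f a b α β →
        (∀ s ∈ Set.Icc a b, (α s, β s) ∈ K) →
        eVariationOn (fun s => ((α s, β s) : ℝ × ℝ)) (Set.Icc a b) ≤ ENNReal.ofReal C) := by
  intro K hK hKsub
  rcases K.eq_empty_or_nonempty with rfl | hne
  · exact ⟨0, fun a b α β hc hmem =>
      absurd (hmem a (left_mem_Icc.2 hc.1.le)) (by simp)⟩
  set T := Prod.fst '' K with hTdef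
  have hTc : IsCompact T := hK.image continuous_fst
  have hTne : T.Nonempty := hne.image _
  have hTI : T ⊆ I := by
    rintro t ⟨r, hrK, rfl⟩
    exact (hKsub hrK).1
  obtain ⟨t0, ht0, hmin⟩ := hTc.exists_isMinOn hTne (hf.mono hTI)
  set m := f t0 with hmdef
  have hm : 0 < m := hfpos t0 (hTI ht0)
  have hminv : 0 ≤ m⁻¹ := inv_nonneg.2 hm.le
  have hbddA := hTc.bddBelow
  have hbddB := hTc.bddAbove
  set A := sInf T with hAdef
  set B := sSup T with hBdef
  refine ⟨(1 + m⁻¹) * (B - A), ?_⟩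
  intro a b α β hc hmem
  have hmemT : ∀ s ∈ Icc a b, α s ∈ T := fun s hs => ⟨(α s, β s), hmem s hs, rfl⟩
  have hmf : ∀ s ∈ Icc a b, m ≤ f (α s) := fun s hs => hmin (hmemT s hs)
  have hmonoα : MonotoneOn α (Icc a b) := (CmpAux.alpha_strictMono hc).monotoneOn
  have hest := CmpAux.beta_est_m hfpos hm hmf hc
  rw [eVariationOn]
  apply iSup_le
  rintro ⟨n, u, hu, us⟩
  have hΔ : ∀ i : ℕ, 0 ≤ α (u (i + 1)) - α (u i) := fun i =>
    sub_nonneg.2 (hmonoα (us i) (us (i + 1)) (hu (Nat.le_succ i)))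
  calc (∑ i ∈ Finset.range n,
        edist ((fun s => ((α s, β s) : ℝ × ℝ)) (u (i + 1))) ((fun s => ((α s, β s) : ℝ × ℝ)) (u i)))
      ≤ ∑ i ∈ Finset.range n,
          ENNReal.ofReal ((1 + m⁻¹) * α (u (i + 1)) - (1 + m⁻¹) * α (u i)) := by
        refine Finset.sum_le_sum fun i _ => ?_
        have hβ := hest (us i) (us (i + 1)) (hu (Nat.le_succ i))
        have hΔi := hΔ i
        rw [Prod.edist_eq]
        apply max_le
        · rw [edist_dist, Real.dist_eq]
          apply ENNReal.ofReal_le_ofReal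
          rw [abs_of_nonneg (by linarith : (0:ℝ) ≤ α (u (i+1)) - α (u i))]
          nlinarith
        · rw [edist_dist, Real.dist_eq]
          apply ENNReal.ofReal_le_ofReal
          nlinarith [hβ, abs_nonneg (β (u (i+1)) - β (u i))]
    _ = ENNReal.ofReal (∑ i ∈ Finset.range n,
          ((1 + m⁻¹) * α (u (i + 1)) - (1 + m⁻¹) * α (u i))) := by
        rw [ENNReal.ofReal_sum_of_nonneg]
        intro i _
        nlinarith [hΔ i]
    _ = ENNReal.ofReal ((1 + m⁻¹) * α (u n) - (1 + m⁻¹) * α (u 0)) := by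
        rw [Finset.sum_range_sub (fun i => (1 + m⁻¹) * α (u i))]
    _ ≤ ENNReal.ofReal ((1 + m⁻¹) * (B - A)) := by
        apply ENNReal.ofReal_le_ofReal
        have h1 : α (u n) ≤ B := le_csSup hbddB (hmemT _ (us n))
        have h2 : A ≤ α (u 0) := csInf_le hbddA (hmemT _ (us 0))
        nlinarith


/-- The Lorentzian warped product comparison space `I ×_f ℝ` (with `I` an open
interval and `f` continuous positive) is globally hyperbolic: all causal diamonds are
compact, and it is non-totally imprisoning, i.e. for every compact set there is a
uniform bound on the (background) metric lengths of causal curves contained in it. -/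
theorem comparisonSpace_globallyHyperbolic
    (I : Set ℝ) (hIo : IsOpen I) (hIc : I.OrdConnected)
    (f : ℝ → ℝ) (hf : ContinuousOn f I) (hfpos : ∀ t ∈ I, 0 < f t) :
    (∀ p q : ℝ × ℝ, p.1 ∈ I → q.1 ∈ I → IsCompact (cmpDiamond I f p q)) ∧
    (∀ K : Set (ℝ × ℝ), IsCompact K → K ⊆ I ×ˢ (Set.univ : Set ℝ) →
      ∃ C : ℝ, ∀ a b α β, IsCausalCurve I f a b α β →
        (∀ s ∈ Set.Icc a b, (α s, β s) ∈ K) →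
        eVariationOn (fun s => ((α s, β s) : ℝ × ℝ)) (Set.Icc a b) ≤ ENNReal.ofReal C) :=
  ⟨comparisonSpace_globallyHyperbolic' I hIo hIc f hf hfpos,
   part2' I hIo hIc f hf hfpos⟩
end
end

section
/- Let I ×_f Y be a Lorentzian warped product with 0 ∈ I and conformal time η(t) = ∫_0^t (1/f(s)) ds. Then for any points p, q in the metric space Y and any s with η⁻¹ defined at s and s + d(p,q), the points (η⁻¹(s), p) and (η⁻¹(s + d(p,q)), q) are null related (causally related with zero time separation). -/
noncomputable section
open Real Set Filter

/-- Causal relation of the Lorentzian warped product `I ×_f Y`: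
`(s,x) ≤ (t,y)` iff `(s,0) ≤ (t, d(x,y))` in the comparison space `I ×_f ℝ`. -/
def wpCausal (I : Set ℝ) (f : ℝ → ℝ) {Y : Type*} [MetricSpace Y] (p q : ℝ × Y) : Prop :=
  causalRel I f (p.1, 0) (q.1, dist p.2 q.2)

/-- Chronological relation of the Lorentzian warped product `I ×_f Y`. -/
def wpChron (I : Set ℝ) (f : ℝ → ℝ) {Y : Type*} [MetricSpace Y] (p q : ℝ × Y) : Prop :=
  chronRel I f (p.1, 0) (q.1, dist p.2 q.2)

/-- Time separation of the Lorentzian warped product `I ×_f Y`: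
`τ((s,x),(t,y)) = τ_{I ×_f ℝ}((s,0),(t,d(x,y)))`. -/
def wpTau (I : Set ℝ) (f : ℝ → ℝ) {Y : Type*} [MetricSpace Y] (p q : ℝ × Y) : ℝ :=
  timeSep I f (p.1, 0) (q.1, dist p.2 q.2)

/-- A future-directed causal curve in the Lorentzian warped product `I ×_f Y`. -/
def IsWpCausalCurve (I : Set ℝ) (f : ℝ → ℝ) {Y : Type*} [MetricSpace Y]
    (γ : ℝ → ℝ × Y) (a b : ℝ) : Prop :=
  a < b ∧ ContinuousOn γ (Set.Icc a b) ∧ (∀ s ∈ Set.Icc a b, (γ s).1 ∈ I) ∧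
    ∀ u ∈ Set.Icc a b, ∀ v ∈ Set.Icc a b, u < v → wpCausal I f (γ u) (γ v) ∧ γ u ≠ γ v

lemma sqrt_key_ineq (ε A B c M : ℝ) (hε : 0 < ε) (hA : 0 < A) (hc : 0 < c)
    (hcM : c ≤ M) (hB : c ^ 2 * B ^ 2 ≤ A ^ 2) :
    Real.sqrt (A ^ 2 - c ^ 2 * B ^ 2) ≤ ε * A + M / (2 * ε) * (c⁻¹ * A - B) := by
  have hcb : c * B ≤ A := by nlinarith
  have hd0 : 0 ≤ A - c * B := by linarith
  have h1 : c⁻¹ * A - B = (A - c * B) / c := by field_simp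
  set t : ℝ := (A - c * B) / (2 * ε) with ht
  have ht0 : 0 ≤ t := by positivity
  have htrel : 2 * ε * t = A - c * B := by rw [ht]; field_simp
  have hr0le : 0 ≤ ε * A + t := by positivity
  have hstep : ε * A + t ≤ ε * A + M / (2 * ε) * (c⁻¹ * A - B) := by
    have e1 : t = c * (A - c * B) / (2 * ε * c) := by rw [ht]; field_simp
    have e2 : M / (2 * ε) * (c⁻¹ * A - B) = M * (A - c * B) / (2 * ε * c) := by
      rw [h1]; field_simp
    rw [e1, e2]
    have hmul : c * (A - c * B) ≤ M * (A - c * B) := by nlinarith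
    have h := (div_le_div_iff_of_pos_right (show (0:ℝ) < 2 * ε * c by positivity)).mpr hmul
    linarith
  have hsq : A ^ 2 - c ^ 2 * B ^ 2 ≤ (ε * A + t) ^ 2 := by
    nlinarith [sq_nonneg (ε * A - t), sq_nonneg (A - c * B), htrel, mul_nonneg hd0 hd0]
  calc Real.sqrt (A ^ 2 - c ^ 2 * B ^ 2) ≤ Real.sqrt ((ε * A + t) ^ 2) :=
        Real.sqrt_le_sqrt hsq
    _ = ε * A + t := Real.sqrt_sq hr0le
    _ ≤ _ := hstep

/-- continuity of the clamped `1/f`. -/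
lemma gtil_cont (I : Set ℝ) (f : ℝ → ℝ) (hf : ContinuousOn f I) (hfpos : ∀ t ∈ I, 0 < f t)
    (t₁ t₂ : ℝ) (h12 : t₁ ≤ t₂) (hsub : Set.Icc t₁ t₂ ⊆ I) :
    Continuous (fun x => (f (max t₁ (min x t₂)))⁻¹) := by
  have hmem : ∀ x : ℝ, max t₁ (min x t₂) ∈ Set.Icc t₁ t₂ := fun x =>
    ⟨le_max_left _ _, max_le h12 (min_le_right _ _)⟩
  have hclamp : Continuous (fun x : ℝ => max t₁ (min x t₂)) :=
    continuous_const.max (continuous_id.min continuous_const)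
  have hcomp : Continuous (fun x => f (max t₁ (min x t₂))) :=
    hf.comp_continuous hclamp (fun x => hsub (hmem x))
  exact hcomp.inv₀ (fun x => (hfpos _ (hsub (hmem x))).ne')

/-- Any causal curve in the comparison space from `(t₁,0)` to `(t₂,D)` with
`∫_{t₁}^{t₂} 1/f = D` has zero Lorentzian length. -/
lemma len_zero (I : Set ℝ) (f : ℝ → ℝ) (hf : ContinuousOn f I) (hfpos : ∀ t ∈ I, 0 < f t)
    (t₁ t₂ D : ℝ) (hsub : ∀ u, t₁ ≤ u → u ≤ t₂ → u ∈ I)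
    (hD : (∫ l in t₁..t₂, 1 / f l) = D)
    (a b : ℝ) (α β : ℝ → ℝ) (hc : IsCausalCurve I f a b α β)
    (ha1 : α a = t₁) (ha2 : β a = 0) (hb1 : α b = t₂) (hb2 : β b = D) :
    lorLength f a b α β = 0 := by
  obtain ⟨hab, hmemI, hdiff, hcaus⟩ := hc
  set G : ℝ → ℝ := fun s => Real.sqrt ((deriv α s) ^ 2 - (f (α s)) ^ 2 * (deriv β s) ^ 2)
    with hG
  have hGnn : 0 ≤ ∫ s in a..b, G s :=
    intervalIntegral.integral_nonneg hab.le (fun u _ => Real.sqrt_nonneg _)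
  by_cases hGi : IntervalIntegrable G MeasureTheory.volume a b
  swap
  · exact intervalIntegral.integral_undef hGi
  -- α is strictly monotone
  have hcont : ContinuousOn α (Set.Icc a b) := fun s hs =>
    ((hdiff s hs).1.continuousAt).continuousWithinAt
  have hmono : StrictMonoOn α (Set.Icc a b) := by
    apply strictMonoOn_of_deriv_pos (convex_Icc a b) hcont
    intro x hx
    rw [interior_Icc] at hx
    exact (hcaus x (Ioo_subset_Icc_self hx)).1
  have h12 : t₁ < t₂ := by
    rw [← ha1, ← hb1]
    exact hmono (left_mem_Icc.2 hab.le) (right_mem_Icc.2 hab.le) hab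
  have hsub' : Set.Icc t₁ t₂ ⊆ I := fun u hu => hsub u hu.1 hu.2
  have hrange : ∀ s ∈ Set.Icc a b, α s ∈ Set.Icc t₁ t₂ := by
    intro s hs
    constructor
    · rw [← ha1]
      exact hmono.monotoneOn (left_mem_Icc.2 hab.le) hs hs.1
    · rw [← hb1]
      exact hmono.monotoneOn hs (right_mem_Icc.2 hab.le) hs.2
  -- sup bound on f
  obtain ⟨u, huI, hM⟩ := isCompact_Icc.exists_isMaxOn (nonempty_Icc.2 h12.le)
    (hf.mono hsub')
  set M := f u with hMdef
  have hMpos : 0 < M := hfpos u (hsub' huI)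
  -- the clamped conformal factor
  set g : ℝ → ℝ := fun x => (f (max t₁ (min x t₂)))⁻¹ with hgdef
  have hgcont : Continuous g := gtil_cont I f hf hfpos t₁ t₂ h12.le hsub'
  have hgeq : ∀ x ∈ Set.Icc t₁ t₂, g x = (f x)⁻¹ := by
    intro x hx
    rw [hgdef]
    simp only [min_eq_left hx.2, max_eq_right hx.1]
  set η : ℝ → ℝ := fun x => ∫ l in t₁..x, g l with hηdef
  have hηd : ∀ x : ℝ, HasDerivAt η (g x) x := fun x =>
    (hgcont.integral_hasStrictDerivAt t₁ x).hasDerivAt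
  set w : ℝ → ℝ := fun s => η (α s) - β s with hwdef
  have hwd : ∀ s ∈ Set.Icc a b, HasDerivAt w ((f (α s))⁻¹ * deriv α s - deriv β s) s := by
    intro s hs
    have h1 : HasDerivAt (fun x => η (α x)) (g (α s) * deriv α s) s :=
      (hηd (α s)).comp s (hdiff s hs).1.hasDerivAt
    rw [hgeq (α s) (hrange s hs)] at h1
    exact h1.sub (hdiff s hs).2.hasDerivAt
  have hwcont : ContinuousOn w (Set.Icc a b) := fun s hs =>
    ((hwd s hs).continuousAt).continuousWithinAt
  -- w b - w a = 0
  have hgint : (∫ l in t₁..t₂, g l) = D := by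
    have : (∫ l in t₁..t₂, g l) = ∫ l in t₁..t₂, 1 / f l := by
      apply intervalIntegral.integral_congr
      intro x hx
      rw [Set.uIcc_of_le h12.le] at hx
      rw [hgeq x hx]
      exact (one_div _).symm
    rw [this, hD]
  have hwba : w b - w a = 0 := by
    simp only [hwdef, hηdef, ha1, ha2, hb1, hb2, intervalIntegral.integral_same]
    rw [hgint]
    ring
  -- the ε-estimate
  have hkey : ∀ ε : ℝ, 0 < ε → (∫ s in a..b, G s) ≤ ε * (t₂ - t₁) := by
    intro ε hε
    set F : ℝ → ℝ := fun s => ε * α s + M / (2 * ε) * w s with hFdef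
    set F' : ℝ → ℝ := fun s => ε * deriv α s
      + M / (2 * ε) * ((f (α s))⁻¹ * deriv α s - deriv β s) with hF'def
    have hFd : ∀ s ∈ Set.Icc a b, HasDerivAt F (F' s) s := fun s hs =>
      ((hdiff s hs).1.hasDerivAt.const_mul ε).add ((hwd s hs).const_mul (M / (2 * ε)))
    have hFcont : ContinuousOn F (Set.Icc a b) := fun s hs =>
      ((hFd s hs).continuousAt).continuousWithinAt
    have hle : ∀ x ∈ Set.Ioo a b, G x ≤ F' x := by
      intro x hx
      have hx' := Ioo_subset_Icc_self hx
      have hc0 : 0 < f (α x) := hfpos _ (hmemI x hx')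
      have hcM : f (α x) ≤ M := hM (hrange x hx')
      exact sqrt_key_ineq ε (deriv α x) (deriv β x) (f (α x)) M hε
        (hcaus x hx').1 hc0 hcM (hcaus x hx').2
    have hint : MeasureTheory.IntegrableOn G (Set.Icc a b) MeasureTheory.volume :=
      (intervalIntegrable_iff_integrableOn_Icc_of_le hab.le).mp hGi
    have := intervalIntegral.integral_le_sub_of_hasDeriv_right_of_le hab.le hFcont
      (fun x hx => (hFd x (Ioo_subset_Icc_self hx)).hasDerivWithinAt) hint hle
    have hFba : F b - F a = ε * (t₂ - t₁) := by
      simp only [hFdef, ha1, hb1]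
      have h4 : M / (2 * ε) * w b - M / (2 * ε) * w a = M / (2 * ε) * (w b - w a) := by
        ring
      have h5 : M / (2 * ε) * (w b - w a) = 0 := by rw [hwba, mul_zero]
      linarith
    linarith [this, hFba.symm.le]
  -- conclude
  have hle0 : (∫ s in a..b, G s) ≤ 0 := by
    by_contra h
    push_neg at h
    have hne : (2:ℝ) * (t₂ - t₁) ≠ 0 := by
      have : (0:ℝ) < t₂ - t₁ := by linarith
      positivity
    have h2 := hkey ((∫ s in a..b, G s) / (2 * (t₂ - t₁)))
      (div_pos h (by linarith))
    have h3 : (∫ s in a..b, G s) / (2 * (t₂ - t₁)) * (t₂ - t₁)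
        = (∫ s in a..b, G s) / 2 := by
      field_simp
      exact div_self (sub_pos.mpr h12).ne'
    rw [h3] at h2
    linarith
  have : lorLength f a b α β = ∫ s in a..b, G s := rfl
  rw [this]
  linarith

/-- Conformal time: if `η(t) = ∫_0^t 1/f` and `η(t₁) = s`, `η(t₂) = s + d(p,q)`, then
`(t₁, p)` and `(t₂, q)` are null related in `I ×_f Y`: causally related with zero time
separation. -/
theorem wp_conformalTime_null
    (I : Set ℝ) (hIc : I.OrdConnected) (h0 : (0 : ℝ) ∈ I)
    (f : ℝ → ℝ) (hf : ContinuousOn f I) (hfpos : ∀ t ∈ I, 0 < f t)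
    {Y : Type*} [MetricSpace Y] (p q : Y) (s t₁ t₂ : ℝ)
    (h₁ : t₁ ∈ I) (h₂ : t₂ ∈ I)
    (hη₁ : (∫ l in (0 : ℝ)..t₁, 1 / f l) = s)
    (hη₂ : (∫ l in (0 : ℝ)..t₂, 1 / f l) = s + dist p q) :
    wpCausal I f (t₁, p) (t₂, q) ∧ wpTau I f (t₁, p) (t₂, q) = 0 := by
  set D := dist p q with hDdef
  have hD0 : 0 ≤ D := dist_nonneg
  have hii : ∀ c₁ ∈ I, ∀ c₂ ∈ I,
      IntervalIntegrable (fun l => 1 / f l) MeasureTheory.volume c₁ c₂ := by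
    intro c₁ hc₁ c₂ hc₂
    apply ContinuousOn.intervalIntegrable
    have hsub := hIc.uIcc_subset hc₁ hc₂
    exact continuousOn_const.div (hf.mono hsub) (fun x hx => (hfpos x (hsub hx)).ne')
  have hkey : (∫ l in t₁..t₂, 1 / f l) = D := by
    have h := intervalIntegral.integral_add_adjacent_intervals
      (hii 0 h0 t₁ h₁) (hii t₁ h₁ t₂ h₂)
    rw [hη₁, hη₂] at h
    linarith
  have h12 : t₁ ≤ t₂ := by
    by_contra hlt
    push_neg at hlt
    have hpos := intervalIntegral.intervalIntegral_pos_of_pos_on (hii t₂ h₂ t₁ h₁)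
      (fun x hx => by
        have hxI : x ∈ I := hIc.out h₂ h₁ (Set.Ioo_subset_Icc_self hx)
        exact one_div_pos.mpr (hfpos x hxI)) hlt
    have hsymm : (∫ l in t₂..t₁, 1 / f l) = -D := by
      rw [intervalIntegral.integral_symm, hkey]
    rw [hsymm] at hpos
    linarith
  have hsub' : ∀ u, t₁ ≤ u → u ≤ t₂ → u ∈ I := fun u hu1 hu2 => hIc.out h₁ h₂ ⟨hu1, hu2⟩
  have htau : wpTau I f (t₁, p) (t₂, q) = 0 := by
    show sSup (insert 0 {L | ∃ a b α β, IsCausalCurve I f a b α β ∧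
      α a = t₁ ∧ β a = 0 ∧ α b = t₂ ∧ β b = D ∧ L = lorLength f a b α β}) = 0
    have hset : insert (0:ℝ) {L | ∃ a b α β, IsCausalCurve I f a b α β ∧
        α a = t₁ ∧ β a = 0 ∧ α b = t₂ ∧ β b = D ∧ L = lorLength f a b α β} = {0} := by
      apply Set.Subset.antisymm
      · rintro L (rfl | ⟨a, b, α, β, hc, ha1, ha2, hb1, hb2, rfl⟩)
        · exact Set.mem_singleton 0
        · rw [Set.mem_singleton_iff]
          exact len_zero I f hf hfpos t₁ t₂ D hsub' hkey a b α β hc ha1 ha2 hb1 hb2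
      · intro x hx
        rw [Set.mem_singleton_iff] at hx
        rw [hx]
        exact Set.mem_insert 0 _
    rw [hset]
    exact csSup_singleton 0
  refine ⟨?_, htau⟩
  rcases hD0.eq_or_lt with hDeq | hDlt
  · -- D = 0 : the two points coincide
    have ht12 : t₁ = t₂ := by
      rcases h12.eq_or_lt with h | h
      · exact h
      · exfalso
        have hpos := intervalIntegral.intervalIntegral_pos_of_pos_on (hii t₁ h₁ t₂ h₂)
          (fun x hx => by
            have hxI : x ∈ I := hIc.out h₁ h₂ (Set.Ioo_subset_Icc_self hx)
            exact one_div_pos.mpr (hfpos x hxI)) h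
        rw [hkey] at hpos
        linarith
    left
    show ((t₁ : ℝ), (0 : ℝ)) = (t₂, D)
    rw [ht12, ← hDeq]
  · -- D > 0 : take the null curve
    have ht12 : t₁ < t₂ := by
      rcases h12.eq_or_lt with h | h
      · exfalso
        have : (∫ l in t₁..t₂, 1 / f l) = 0 := by
          rw [← h, intervalIntegral.integral_same]
        rw [hkey] at this
        linarith
      · exact h
    set g : ℝ → ℝ := fun x => (f (max t₁ (min x t₂)))⁻¹ with hgdef
    have hgcont : Continuous g :=
      gtil_cont I f hf hfpos t₁ t₂ h12 (fun u hu => hsub' u hu.1 hu.2)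
    set β : ℝ → ℝ := fun x => ∫ l in t₁..x, g l with hβdef
    have hβd : ∀ x : ℝ, HasDerivAt β (g x) x := fun x =>
      (hgcont.integral_hasStrictDerivAt t₁ x).hasDerivAt
    have hgeq : ∀ x, t₁ ≤ x → x ≤ t₂ → g x = (f x)⁻¹ := by
      intro x hx1 hx2
      simp only [hgdef, min_eq_left hx2, max_eq_right hx1]
    right
    refine ⟨t₁, t₂, fun x => x, β, ⟨ht12, fun u hu => hsub' u hu.1 hu.2,
      fun u _ => ⟨differentiableAt_fun_id, (hβd u).differentiableAt⟩, fun u hu => ?_⟩,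
      rfl, ?_, rfl, ?_⟩
    · rw [deriv_id'', (hβd u).deriv, hgeq u hu.1 hu.2]
      refine ⟨one_pos, le_of_eq ?_⟩
      have hne : f u ≠ 0 := (hfpos u (hsub' u hu.1 hu.2)).ne'
      field_simp
    · show (∫ l in t₁..t₁, g l) = 0
      exact intervalIntegral.integral_same
    · show (∫ l in t₁..t₂, g l) = D
      have : (∫ l in t₁..t₂, g l) = ∫ l in t₁..t₂, 1 / f l := by
        apply intervalIntegral.integral_congr
        intro x hx
        rw [Set.uIcc_of_le h12] at hx
        rw [hgeq x hx.1 hx.2]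
        exact (one_div _).symm
      rw [this, hkey]
end
end

section
/- The map f : (-π/2, π/2) × ℝ → {p ∈ ℝ^{1,2} : b(p,p) = -1} given by f(t,x) = (sin t, cos t cosh x, cos t sinh x) is an isometric embedding of the Lorentzian warped product ((-π/2,π/2) ×_cos ℝ, -dt² + cos(t)² dx²) into anti-deSitter space, the quadric {b(p,p) = -1} in the semi-Riemannian space ℝ^{1,2} of signature (-,-,+) with the induced metric. -/
noncomputable section
open Real Set

/-- The bilinear form of signature `(-,-,+)` on `ℝ^{1,2} = ℝ × ℝ × ℝ`. -/
def bForm (p q : ℝ × ℝ × ℝ) : ℝ :=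
  -(p.1 * q.1) - p.2.1 * q.2.1 + p.2.2 * q.2.2

/-- The embedding of `(-π/2,π/2) ×_cos ℝ` into the anti-deSitter quadric. -/
def adsEmb (p : ℝ × ℝ) : ℝ × ℝ × ℝ :=
  (Real.sin p.1, Real.cos p.1 * Real.cosh p.2, Real.cos p.1 * Real.sinh p.2)

/-- `f(t,x) = (sin t, cos t cosh x, cos t sinh x)` is an isometric embedding of the
Lorentzian warped product `((-π/2,π/2) ×_cos ℝ, -dt² + cos(t)² dx²)` into the quadric
`{b(p,p) = -1} ⊆ ℝ^{1,2}`: it is injective, takes values in the quadric, and the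
pullback of the induced metric is `-dt² + cos(t)² dx²`, i.e. for the differential `L` of
`f` one has `b(L(1,0), L(1,0)) = -1`, `b(L(1,0), L(0,1)) = 0` and
`b(L(0,1), L(0,1)) = cos(t)²`. -/
theorem adsEmb_isometric_embedding :
    Set.InjOn adsEmb (Set.Ioo (-(π / 2)) (π / 2) ×ˢ (Set.univ : Set ℝ)) ∧
    (∀ p : ℝ × ℝ, p.1 ∈ Set.Ioo (-(π / 2)) (π / 2) →
      bForm (adsEmb p) (adsEmb p) = -1) ∧
    (∀ p : ℝ × ℝ, p.1 ∈ Set.Ioo (-(π / 2)) (π / 2) →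
      ∃ L : ℝ × ℝ →L[ℝ] ℝ × ℝ × ℝ, HasFDerivAt adsEmb L p ∧
        bForm (L (1, 0)) (L (1, 0)) = -1 ∧
        bForm (L (1, 0)) (L (0, 1)) = 0 ∧
        bForm (L (0, 1)) (L (0, 1)) = Real.cos p.1 ^ 2) := by
  refine ⟨?_, ?_, ?_⟩
  · rintro ⟨t₁, x₁⟩ ⟨ht₁, -⟩ ⟨t₂, x₂⟩ ⟨ht₂, -⟩ h
    simp only [adsEmb, Prod.mk.injEq] at h
    obtain ⟨h1, h2, h3⟩ := h
    have ht : t₁ = t₂ := by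
      apply Real.injOn_sin ⟨le_of_lt ht₁.1, le_of_lt ht₁.2⟩ ⟨le_of_lt ht₂.1, le_of_lt ht₂.2⟩ h1
    subst ht
    have hc : Real.cos t₁ ≠ 0 := by
      have := Real.cos_pos_of_mem_Ioo ht₁
      linarith
    have hx : Real.sinh x₁ = Real.sinh x₂ := by
      field_simp at h3; tauto
    exact Prod.ext rfl (Real.sinh_injective hx)
  · intro p _
    have h1 := Real.sin_sq_add_cos_sq p.1
    have h2 := Real.cosh_sq p.2
    simp only [bForm, adsEmb]
    nlinarith [Real.cosh_sq p.2]
  · intro p _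
    have hsin : HasFDerivAt (fun q : ℝ × ℝ => Real.sin q.1)
        (Real.cos p.1 • ContinuousLinearMap.fst ℝ ℝ ℝ) p :=
      (Real.hasDerivAt_sin p.1).comp_hasFDerivAt p (hasFDerivAt_fst)
    have hcos : HasFDerivAt (fun q : ℝ × ℝ => Real.cos q.1)
        ((-Real.sin p.1) • ContinuousLinearMap.fst ℝ ℝ ℝ) p :=
      (Real.hasDerivAt_cos p.1).comp_hasFDerivAt p (hasFDerivAt_fst)
    have hcosh : HasFDerivAt (fun q : ℝ × ℝ => Real.cosh q.2)
        (Real.sinh p.2 • ContinuousLinearMap.snd ℝ ℝ ℝ) p :=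
      (Real.hasDerivAt_cosh p.2).comp_hasFDerivAt p (hasFDerivAt_snd)
    have hsinh : HasFDerivAt (fun q : ℝ × ℝ => Real.sinh q.2)
        (Real.cosh p.2 • ContinuousLinearMap.snd ℝ ℝ ℝ) p :=
      (Real.hasDerivAt_sinh p.2).comp_hasFDerivAt p (hasFDerivAt_snd)
    have h2 := hcos.mul hcosh
    have h3 := hcos.mul hsinh
    refine ⟨_, HasFDerivAt.prodMk hsin (HasFDerivAt.prodMk h2 h3), ?_, ?_, ?_⟩ <;>
      simp only [bForm, ContinuousLinearMap.prod_apply, ContinuousLinearMap.add_apply,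
        ContinuousLinearMap.coe_smul', Pi.smul_apply, ContinuousLinearMap.coe_fst',
        ContinuousLinearMap.coe_snd', smul_eq_mul, mul_one, mul_zero] <;>
      nlinarith [Real.sin_sq_add_cos_sq p.1, Real.cosh_sq p.2]
end
end

section
/- In 2-dimensional anti-deSitter space, the hyperbolic law of cosines holds: for a timelike triangle with vertices x₁, x₂, x₃, side lengths a_{ij} = max(τ(x_i,x_j), τ(x_j,x_i)), hyperbolic angle ω at x₂, and sign σ = 1 if x₂ is not a time endpoint (σ = -1 if it is), one has cos(a₁₃) = cos(a₁₂)cos(a₂₃) - σ sin(a₁₂) sin(a₂₃) cosh(ω). In particular, fixing all but one side length, ω is a strictly increasing function of the longest side a₁₃ and strictly decreasing in each of the other side lengths. -/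
noncomputable section
open Real Set
open scoped Classical

/-- The inverse hyperbolic cosine. -/
def arcosh (x : ℝ) : ℝ := Real.log (x + Real.sqrt (x ^ 2 - 1))

/-- A tangent vector `u` at a point `p` of the quadric `{b = -1}` is future directed
(with respect to the chosen time orientation, rotation in the first two coordinates). -/
def IsFuture (p u : ℝ × ℝ × ℝ) : Prop :=
  0 < u.1 * p.2.1 - u.2.1 * p.1

/-- The function solving the (`σ = 1`) law of cosines for the hyperbolic angle:
`ω = arcosh ((cos a cos b - cos c)/(sin a sin b))`. -/
def locAngle (a b c : ℝ) : ℝ :=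
  _root_.arcosh ((Real.cos a * Real.cos b - Real.cos c) / (Real.sin a * Real.sin b))

/-- `cosh ∘ arcosh = id` on `[1, ∞)`. -/
private lemma cosh_arcosh' {x : ℝ} (hx : 1 ≤ x) : Real.cosh (_root_.arcosh x) = x := by
  have h1 : 0 ≤ x^2 - 1 := by nlinarith
  have h2 : Real.sqrt (x^2-1) ^ 2 = x^2 - 1 := Real.sq_sqrt h1
  have h3 : 0 < x + Real.sqrt (x^2-1) := by
    have := Real.sqrt_nonneg (x^2-1); linarith
  rw [_root_.arcosh, Real.cosh_eq, Real.exp_log h3, Real.exp_neg, Real.exp_log h3]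
  field_simp
  nlinarith [h2]

private lemma arcosh_strictMonoOn' : StrictMonoOn _root_.arcosh (Set.Ici 1) := by
  intro x hx y hy hxy
  simp only [mem_Ici] at hx hy
  have h3 : 0 < x + Real.sqrt (x^2-1) := by
    have := Real.sqrt_nonneg (x^2-1); linarith
  apply Real.log_lt_log h3
  have : Real.sqrt (x^2-1) ≤ Real.sqrt (y^2-1) := by
    apply Real.sqrt_le_sqrt; nlinarith
  linarith

private lemma one_le_g' {a b c : ℝ} (ha : 0 < a) (hb : 0 < b) (hc : a + b ≤ c) (hcpi : c < π) :
    1 ≤ (Real.cos a * Real.cos b - Real.cos c) / (Real.sin a * Real.sin b) := by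
  have hapi : a < π := by linarith
  have hbpi : b < π := by linarith
  have hsa : 0 < Real.sin a := Real.sin_pos_of_pos_of_lt_pi ha hapi
  have hsb : 0 < Real.sin b := Real.sin_pos_of_pos_of_lt_pi hb hbpi
  rw [le_div_iff₀ (by positivity)]
  have h1 : Real.cos c ≤ Real.cos (a + b) :=
    Real.cos_le_cos_of_nonneg_of_le_pi (by linarith) (le_of_lt hcpi) hc
  have h2 : Real.cos (a+b) = Real.cos a * Real.cos b - Real.sin a * Real.sin b :=
    Real.cos_add a b
  linarith

private lemma sign_key' (k C A B X Y : ℝ) (hk : 1 ≤ k) (hA : A^2 = k + X^2) (hB : B^2 = k + Y^2)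
    (hkey : k*C + A*B = X*Y) (hABpos : 0 < A*B) : C ≤ -1 := by
  have hS2 : (A*B)^2 = (k+X^2)*(k+Y^2) := by rw [mul_pow, hA, hB]
  have habk : k + X*Y ≤ A*B := by
    nlinarith [hS2, hABpos, hk, mul_nonneg (by linarith : (0:ℝ) ≤ k) (sq_nonneg (X - Y))]
  nlinarith [habk, hkey, hk]

/-- Strict antitonicity of `locAngle` in the first side length. -/
private lemma locAngle_anti (b c : ℝ) (hb : 0 < b) (hc : c < π) :
    StrictAntiOn (fun a => locAngle a b c) (Set.Ioc 0 (c - b)) := by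
  intro a1 h1 a2 h2 hlt
  simp only [locAngle]
  simp only [mem_Ioc] at h1 h2
  obtain ⟨ha1, _⟩ := h1
  obtain ⟨ha1'', ha2⟩ := h2
  have ha2c : a2 + b ≤ c := by linarith
  have hbpi : b < π := by linarith
  have hsb : 0 < Real.sin b := Real.sin_pos_of_pos_of_lt_pi hb hbpi
  have hsa1 : 0 < Real.sin a1 := Real.sin_pos_of_pos_of_lt_pi ha1 (by linarith)
  have hsa2 : 0 < Real.sin a2 := Real.sin_pos_of_pos_of_lt_pi (by linarith) (by linarith)
  -- the cross inequality
  have hcross :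
      (Real.cos a2 * Real.cos b - Real.cos c) * (Real.sin a1 * Real.sin b) <
      (Real.cos a1 * Real.cos b - Real.cos c) * (Real.sin a2 * Real.sin b) := by
    set m := (a1 + a2) / 2 with hm
    set s := (a2 - a1) / 2 with hs
    have ha1e : a1 = m - s := by rw [hm, hs]; ring
    have ha2e : a2 = m + s := by rw [hm, hs]; ring
    have hspos : 0 < s := by rw [hs]; linarith
    have hss : 0 < Real.sin s :=
      Real.sin_pos_of_pos_of_lt_pi hspos (by rw [hs]; nlinarith [Real.pi_gt_three])
    have hi : Real.cos (c - m) ≤ Real.cos (b + s) := by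
      apply Real.cos_le_cos_of_nonneg_of_le_pi (by rw [hs]; nlinarith) (by rw [hm]; nlinarith)
      rw [hm, hs]; linarith
    have hii : Real.cos (c + m) < Real.cos (b - s) := by
      have hid : Real.cos (b - s) - Real.cos (c + m) =
          2 * Real.sin ((c + m + (b - s)) / 2) * Real.sin ((c + m - (b - s)) / 2) := by
        rw [Real.cos_sub_cos,
          show (b - s - (c + m)) / 2 = -((c + m - (b - s)) / 2) by ring, Real.sin_neg]
        ring_nf
      have hP : 0 < Real.sin ((c + m + (b - s)) / 2) := by
        apply Real.sin_pos_of_pos_of_lt_pi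
        · rw [hm, hs]; nlinarith
        · rw [hm, hs]; nlinarith
      have hQ : 0 < Real.sin ((c + m - (b - s)) / 2) := by
        apply Real.sin_pos_of_pos_of_lt_pi
        · rw [hm, hs]; nlinarith
        · rw [hm, hs]; nlinarith [Real.pi_pos]
      nlinarith
    have key : Real.cos c * Real.cos m < Real.cos b * Real.cos s := by
      have e1 : Real.cos (b+s) + Real.cos (b-s) = 2 * Real.cos b * Real.cos s := by
        rw [Real.cos_add, Real.cos_sub]; ring
      have e2 : Real.cos (c+m) + Real.cos (c-m) = 2 * Real.cos c * Real.cos m := by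
        rw [Real.cos_add, Real.cos_sub]; ring
      linarith
    have hE : (Real.cos a2 * Real.cos b - Real.cos c) * Real.sin a1 -
        (Real.cos a1 * Real.cos b - Real.cos c) * Real.sin a2 =
        2 * Real.sin s * (Real.cos c * Real.cos m - Real.cos b * Real.cos s) := by
      rw [ha1e, ha2e, Real.cos_add, Real.cos_sub, Real.sin_add, Real.sin_sub]
      linear_combination (-2 * Real.cos b * Real.cos s * Real.sin s) * Real.sin_sq_add_cos_sq m
    nlinarith [mul_pos hsb (mul_pos (mul_pos two_pos hss)
      (by linarith : (0:ℝ) < Real.cos b * Real.cos s - Real.cos c * Real.cos m)), hE,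
      mul_pos hsb hss]
  have hg2 : 1 ≤ (Real.cos a2 * Real.cos b - Real.cos c) / (Real.sin a2 * Real.sin b) :=
    one_le_g' (by linarith) hb ha2c hc
  have hg1 : 1 ≤ (Real.cos a1 * Real.cos b - Real.cos c) / (Real.sin a1 * Real.sin b) :=
    one_le_g' ha1 hb (by linarith) hc
  have hglt : (Real.cos a2 * Real.cos b - Real.cos c) / (Real.sin a2 * Real.sin b) <
      (Real.cos a1 * Real.cos b - Real.cos c) / (Real.sin a1 * Real.sin b) := by
    rw [div_lt_div_iff₀ (by positivity) (by positivity)]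
    exact hcross
  exact arcosh_strictMonoOn' (Set.mem_Ici.mpr hg2) (Set.mem_Ici.mpr hg1) hglt

/-- The hyperbolic law of cosines in 2-dimensional anti-deSitter space, modelled on the
quadric `{b(p,p) = -1} ⊆ ℝ^{1,2}`.  The vertices are `x₁, x₂, x₃`, the sides from `x₂`
are the geodesics `λ ↦ cos λ • x₂ + sin λ • u` resp. `v` with unit timelike tangents
`u, v ⊥ x₂`, the side lengths are `a₁₂, a₂₃` and `a₁₃ = arccos (-b(x₁,x₃))`, the
hyperbolic angle at `x₂` is `ω = arcosh |b(u,v)|`, and `σ = -1` iff `x₂` is a time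
endpoint (i.e. `u` and `v` point in the same time direction).  Then
`cos a₁₃ = cos a₁₂ cos a₂₃ - σ sin a₁₂ sin a₂₃ cosh ω`.  Moreover (the `σ = 1`
configuration, where `a₁₃` is the longest side) the angle is strictly increasing in the
longest side length and strictly decreasing in each of the two other side lengths. -/
theorem ads_law_of_cosines :
    (∀ (x₁ x₂ x₃ u v : ℝ × ℝ × ℝ) (a₁₂ a₂₃ a₁₃ ω σ : ℝ),
      bForm x₂ x₂ = -1 → bForm u u = -1 → bForm v v = -1 →
      bForm x₂ u = 0 → bForm x₂ v = 0 →
      a₁₂ ∈ Set.Ioo 0 π → a₂₃ ∈ Set.Ioo 0 π →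
      x₁ = Real.cos a₁₂ • x₂ + Real.sin a₁₂ • u →
      x₃ = Real.cos a₂₃ • x₂ + Real.sin a₂₃ • v →
      -bForm x₁ x₃ ∈ Set.Ioc (-1 : ℝ) 1 →
      a₁₃ = Real.arccos (-bForm x₁ x₃) →
      ω = _root_.arcosh |bForm u v| →
      σ = (if (IsFuture x₂ u ↔ IsFuture x₂ v) then -1 else 1) →
      Real.cos a₁₃ =
        Real.cos a₁₂ * Real.cos a₂₃ - σ * Real.sin a₁₂ * Real.sin a₂₃ * Real.cosh ω) ∧
    (∀ a b : ℝ, 0 < a → 0 < b → a + b < π →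
      StrictMonoOn (fun c => locAngle a b c) (Set.Ico (a + b) π)) ∧
    (∀ b c : ℝ, 0 < b → c < π → StrictAntiOn (fun a => locAngle a b c) (Set.Ioc 0 (c - b))) ∧
    (∀ a c : ℝ, 0 < a → c < π → StrictAntiOn (fun b => locAngle a b c) (Set.Ioc 0 (c - a))) := by
  refine ⟨?_, ?_, ?_, ?_⟩
  ·
    intro x₁ x₂ x₃ u v a₁₂ a₂₃ a₁₃ ω σ hpp huu hvv hpu hpv ha12 ha23 hx1 hx3 hmem h13 hω hσ
    obtain ⟨p1, p2, p3⟩ := x₂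
    obtain ⟨u1, u2, u3⟩ := u
    obtain ⟨v1, v2, v3⟩ := v
    subst hx1 hx3
    simp only [bForm, IsFuture, Prod.smul_mk, Prod.mk_add_mk, smul_eq_mul] at *
    set C : ℝ := -(u1*v1) - u2*v2 + u3*v3 with hC
    set A : ℝ := u2*p1 - u1*p2 with hA
    set B : ℝ := v2*p1 - v1*p2 with hB
    have hA2 : A^2 = 1 + p3^2 + u3^2 := by
      rw [hA]
      linear_combination (-p1^2-p2^2) * huu + (-(1+u3^2)) * hpp + (p1*u1+p2*u2+p3*u3) * hpu
    have hB2 : B^2 = 1 + p3^2 + v3^2 := by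
      rw [hB]
      linear_combination (-p1^2-p2^2) * hvv + (-(1+v3^2)) * hpp + (p1*v1+p2*v2+p3*v3) * hpv
    have hkey : (1+p3^2) * C + A*B = u3*v3 := by
      rw [hC, hA, hB]
      linear_combination (-(u1*v1) - u2*v2) * hpp + (p1*v1 + p2*v2) * hpu + p3*u3 * hpv
    have hk1 : (1:ℝ) ≤ 1 + p3^2 := by nlinarith [sq_nonneg p3]
    have hAne : A ≠ 0 := by
      intro h; rw [h] at hA2; nlinarith [sq_nonneg p3, sq_nonneg u3]
    have hBne : B ≠ 0 := by
      intro h; rw [h] at hB2; nlinarith [sq_nonneg p3, sq_nonneg v3]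
    -- cos a₁₃ = cos a₁₂ cos a₂₃ - sin a₁₂ sin a₂₃ C
    have hconn : Real.cos a₁₃ = Real.cos a₁₂ * Real.cos a₂₃ - Real.sin a₁₂ * Real.sin a₂₃ * C := by
      rw [h13, Real.cos_arccos (le_of_lt hmem.1) hmem.2, hC]
      linear_combination (- (Real.cos a₁₂ * Real.cos a₂₃)) * hpp
        + (- (Real.cos a₁₂ * Real.sin a₂₃)) * hpv + (- (Real.sin a₁₂ * Real.cos a₂₃)) * hpu
    -- hypothesis on bForm u v in terms of C
    have hbuv : ω = _root_.arcosh |C| := hω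
    by_cases hiff : (0 < u1 * p2 - u2 * p1) ↔ (0 < v1 * p2 - v2 * p1)
    · -- same time orientation: A, B same sign, AB > 0, C ≤ -1
      replace hσ : σ = -1 := hσ.trans (if_pos hiff)
      have hABpos : 0 < A * B := by
        rcases lt_or_gt_of_ne hAne with h | h
        · have h' : 0 < u1 * p2 - u2 * p1 := by rw [hA] at h; linarith
          have h2 := hiff.mp h'
          have hB' : B < 0 := by rw [hB]; linarith
          exact mul_pos_of_neg_of_neg h hB'
        · have h' : ¬ (0 < u1 * p2 - u2 * p1) := by rw [hA] at h; intro hcon; linarith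
          have h2 := fun hv => h' (hiff.mpr hv)
          have : 0 < B := by
            rcases lt_or_gt_of_ne hBne with hb | hb
            · exfalso; apply h2; rw [hB] at hb; linarith
            · exact hb
          exact mul_pos h this
      have hCle : C ≤ -1 := sign_key' (1+p3^2) C A B u3 v3 hk1 hA2 hB2 hkey hABpos
      have habs : |C| = -C := abs_of_nonpos (by linarith)
      rw [hσ, hbuv, habs, cosh_arcosh' (by linarith), hconn]; ring
    · replace hσ : σ = 1 := hσ.trans (if_neg hiff)
      have hABneg : A * B < 0 := by
        rcases lt_or_gt_of_ne hAne with h | h <;> rcases lt_or_gt_of_ne hBne with h2 | h2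
        · exfalso; apply hiff
          rw [hA] at h; rw [hB] at h2
          constructor <;> intro <;> linarith
        · exact mul_neg_of_neg_of_pos h h2
        · exact mul_neg_of_pos_of_neg h h2
        · exfalso; apply hiff
          rw [hA] at h; rw [hB] at h2
          constructor <;> intro <;> linarith
      have hCge : 1 ≤ C := by
        have := sign_key' (1+p3^2) (-C) (-A) B (-u3) v3 hk1
          (by linear_combination hA2) hB2 (by linear_combination -hkey)
          (by linarith [neg_mul A B])
        linarith
      have habs : |C| = C := abs_of_nonneg (by linarith)
      rw [hσ, hbuv, habs, cosh_arcosh' hCge, hconn]; ring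
  · -- strictly increasing in the longest side
    intro a b ha hb hab c1 hc1 c2 hc2 hlt
    simp only [locAngle]
    simp only [mem_Ico] at hc1 hc2
    have hsa : 0 < Real.sin a := Real.sin_pos_of_pos_of_lt_pi ha (by linarith)
    have hsb : 0 < Real.sin b := Real.sin_pos_of_pos_of_lt_pi hb (by linarith)
    have hg1 : 1 ≤ (Real.cos a * Real.cos b - Real.cos c1) / (Real.sin a * Real.sin b) :=
      one_le_g' ha hb hc1.1 hc1.2
    have hg2 : 1 ≤ (Real.cos a * Real.cos b - Real.cos c2) / (Real.sin a * Real.sin b) :=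
      one_le_g' ha hb hc2.1 hc2.2
    have hcc : Real.cos c2 < Real.cos c1 := by
      apply Real.cos_lt_cos_of_nonneg_of_le_pi (by linarith) (by linarith) hlt
    have hglt : (Real.cos a * Real.cos b - Real.cos c1) / (Real.sin a * Real.sin b) <
        (Real.cos a * Real.cos b - Real.cos c2) / (Real.sin a * Real.sin b) := by
      rw [div_lt_div_iff₀ (by positivity) (by positivity)]
      nlinarith [mul_pos (by linarith : (0:ℝ) < Real.cos c1 - Real.cos c2) (mul_pos hsa hsb)]
    exact arcosh_strictMonoOn' (Set.mem_Ici.mpr hg1) (Set.mem_Ici.mpr hg2) hglt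
  · exact locAngle_anti
  · -- symmetric to the previous part
    intro a c ha hc b1 hb1 b2 hb2 hlt
    have hsymm : ∀ x y : ℝ, locAngle x y c = locAngle y x c := by
      intro x y
      simp only [locAngle, mul_comm]
    have h := locAngle_anti a c ha hc hb1 hb2 hlt
    simp only at h
    calc locAngle a b2 c = locAngle b2 a c := hsymm a b2
      _ < locAngle b1 a c := h
      _ = locAngle a b1 c := (hsymm a b1).symm
end
end
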